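/- arXiv:2201.08899 — 4 statements merged into one kernel-verified Lean document; each statement's English description precedes it below -/
import Mathlib

section
/- Let w = (w_0, …, w_η) be a finite path on a finite set V, let b ∈ V with b ≠ w_η, and set V_1 = V ∖ {b}. Define L^{(1)}(w) as follows: if b does not occur in 𝔏(w), set L^{(1)}(w) = 𝔏(w); otherwise, writing 𝔍(w) = (n_0, …, n_ι) and letting n_j be the unique element of 𝔍(w) with w_{n_j} = b, set L^{(1)}(w) = (w_{n_0}, …, w_{n_j}) ⊕ ℜ(𝔏(ℜ(w|_{[n_j, η]}))). Define L̃^{(2)}(w) = 𝔏_{V_1}(w) if b does not occur in 𝔏(w), and L̃^{(2)}(w) = (w_{n_0}, …, w_{n_j}) ⊕ ℜ(𝔏_{V_1}(ℜ(w|_{[n_j, η]}))) otherwise, and set L^{(2)}(w) = 𝔏(L̃^{(2)}(w)). Then L^{(1)}(w) = L^{(2)}(w). -/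
open MeasureTheory

namespace LERW

variable {V : Type*} [DecidableEq V]

/-- The suffix of `l` strictly after the last occurrence of `a` in `l`
(`l` itself if `a` does not occur in `l`). -/
def dropToLastOcc (a : V) (l : List V) : List V :=
  (l.reverse.takeWhile (fun z => z ≠ a)).reverse

lemma dropToLastOcc_length_le (a : V) (l : List V) :
    (dropToLastOcc a l).length ≤ l.length := by
  unfold dropToLastOcc
  calc ((l.reverse.takeWhile (fun z => z ≠ a)).reverse).length
      = (l.reverse.takeWhile (fun z => z ≠ a)).length := by simp
    _ ≤ l.reverse.length := (List.takeWhile_sublist _).length_le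
    _ = l.length := by simp

/-- Partial loop erasure `𝔏_S` of a finite path, associated with a set `S` of vertices. -/
def PLE (S : Finset V) : List V → List V
  | [] => []
  | a :: rest =>
    if a ∈ S then
      if a = (a :: rest).getLast (List.cons_ne_nil a rest) then [a]
      else a :: PLE S (dropToLastOcc a rest)
    else
      if rest = [] then [a]
      else a :: PLE S rest
termination_by l => l.length
decreasing_by
  · simpa using Nat.lt_succ_of_le (dropToLastOcc_length_le a rest)
  · simp

variable [Fintype V]

/-- The (full) loop erasure `𝔏 = 𝔏_V`. -/
def LE : List V → List V := PLE Finset.univ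

/-- Iterated partial loop erasure `𝔏_{W m} ∘ ⋯ ∘ 𝔏_{W 2} ∘ 𝔏_{W 1}`. -/
def iterPLE (W : ℕ → Finset V) : ℕ → List V → List V
  | 0, l => l
  | n + 1, l => PLE (W (n + 1)) (iterPLE W n l)

/-- The remaining suffix `w|_{[n_j , η]}` of the loop-erasing walk of `𝔏` the first time
its current value equals `b` (`[]` if this never happens). -/
def LEsuffixAt (b : V) : List V → List V
  | [] => []
  | a :: rest =>
    if a = b then a :: rest
    else if a = (a :: rest).getLast (List.cons_ne_nil a rest) then []
    else LEsuffixAt b (dropToLastOcc a rest)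
termination_by l => l.length
decreasing_by
  simpa using Nat.lt_succ_of_le (dropToLastOcc_length_le a rest)

/-- Entry time `τ_A` into `A ⊆ V`, valued in `ℕ∞`. -/
noncomputable def entryTime (A : Finset V) (ω : ℕ → V) : ℕ∞ :=
  sInf {m : ℕ∞ | ∃ n : ℕ, m = (n : ℕ∞) ∧ ω n ∈ A}

/-- Entry time `τ_A` as a natural number (junk value `0` when `A` is never visited). -/
noncomputable def entryTimeNat (A : Finset V) (ω : ℕ → V) : ℕ :=
  sInf {n : ℕ | ω n ∈ A}

/-- The random finite path `X|_{[0, τ_A]} = (X_0, X_1, …, X_{τ_A})`. -/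
noncomputable def stoppedPath (A : Finset V) (ω : ℕ → V) : List V :=
  (List.range (entryTimeNat A ω + 1)).map ω

/-- Iterated hitting times `τ̊_W^{(n)}` of `W`, valued in `ℕ∞` (with the convention
`τ̊_W^{(0)} = 0`). -/
noncomputable def iterHit (W : Finset V) (ω : ℕ → V) : ℕ → ℕ∞
  | 0 => 0
  | n + 1 => sInf {m : ℕ∞ | ∃ k : ℕ, m = (k : ℕ∞) ∧ iterHit W ω n < (k : ℕ∞) ∧ ω k ∈ W}

/-- The time `τ̊_W^{(n)} ∧ τ_A`, as a natural number. -/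
noncomputable def traceTime (W A : Finset V) (ω : ℕ → V) (n : ℕ) : ℕ :=
  (iterHit W ω n ⊓ entryTime A ω).toNat

theorem list_length_ind {α : Type*} (P : List α → Prop)
    (H : ∀ l, (∀ t, t.length < l.length → P t) → P l) : ∀ l, P l :=
  fun l => (measure (List.length (α := α))).wf.induction l H


lemma dropToLastOcc_suffix (a : V) (l : List V) : dropToLastOcc a l <:+ l :=
  List.reverse_prefix.mp (by simpa [dropToLastOcc] using List.takeWhile_prefix (l := l.reverse) (fun z => z ≠ a))

lemma not_mem_dropToLastOcc (a : V) (l : List V) : a ∉ dropToLastOcc a l := by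
  intro h
  have := List.mem_takeWhile_imp (by simpa [dropToLastOcc] using h)
  simp at this

lemma dropToLastOcc_of_not_mem {a : V} {l : List V} (h : a ∉ l) : dropToLastOcc a l = l := by
  unfold dropToLastOcc
  rw [List.takeWhile_eq_self_iff.mpr, List.reverse_reverse]
  intro x hx
  simp only [ne_eq, decide_eq_true_eq]
  rintro rfl
  exact h (List.mem_reverse.mp hx)

lemma getLast?_dropToLastOcc {a : V} {l : List V} (h : l.getLast? ≠ some a) :
    (dropToLastOcc a l).getLast? = l.getLast? := by
  unfold dropToLastOcc
  rw [List.getLast?_reverse, ← List.head?_reverse (l := l)]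
  cases hr : l.reverse with
  | nil => simp
  | cons x t =>
    have hx : x ≠ a := by
      rw [← List.head?_reverse (l := l), hr] at h; simpa using h
    simp [List.takeWhile_cons, hx]

lemma dropToLastOcc_eq_nil {a : V} {l : List V} (h : l.getLast? = some a) :
    dropToLastOcc a l = [] := by
  unfold dropToLastOcc
  rw [← List.head?_reverse (l := l)] at h
  cases hr : l.reverse with
  | nil => simp
  | cons x t =>
    rw [hr] at h
    simp only [List.head?_cons, Option.some.injEq] at h
    subst h
    simp [List.takeWhile_cons]

lemma dropToLastOcc_append_singleton {x a : V} (h : a ≠ x) (m : List V) :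
    dropToLastOcc x (m ++ [a]) = dropToLastOcc x m ++ [a] := by
  simp [dropToLastOcc, List.takeWhile_cons, h]


lemma PLE_nil (S : Finset V) : PLE S ([] : List V) = [] := by rw [PLE]

lemma PLE_cons (S : Finset V) (a : V) (r : List V) :
    PLE S (a :: r) = if a ∈ S then
      if a = (a :: r).getLast (List.cons_ne_nil a r) then [a]
      else a :: PLE S (dropToLastOcc a r)
    else
      if r = [] then [a]
      else a :: PLE S r := by rw [PLE]

lemma head?_PLE (S : Finset V) (l : List V) : (PLE S l).head? = l.head? := by
  cases l with
  | nil => rw [PLE_nil]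
  | cons a r => rw [PLE_cons]; split_ifs <;> simp

lemma PLE_ne_nil (S : Finset V) {l : List V} (h : l ≠ []) : PLE S l ≠ [] := by
  intro hc
  have := head?_PLE S l
  rw [hc] at this
  exact h (List.head?_eq_none_iff.mp this.symm)

lemma mem_of_mem_PLE_aux {S : Finset V} {x : V} :
    ∀ l : List V, x ∈ PLE S l → x ∈ l := by
  refine list_length_ind _ (fun l ih => ?_)
  cases l with
  | nil => rw [PLE_nil]; exact id
  | cons a r =>
    rw [PLE_cons]
    intro hx
    split_ifs at hx with h1 h2 h3
    · exact List.mem_cons.mpr (Or.inl (by simpa using hx))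
    · rcases List.mem_cons.mp hx with rfl | hx
      · exact List.mem_cons_self
      · exact List.mem_cons_of_mem _
          ((dropToLastOcc_suffix a r).subset
            (ih _ (by simpa using Nat.lt_succ_of_le (dropToLastOcc_length_le a r)) hx))
    · exact List.mem_cons.mpr (Or.inl (by simpa using hx))
    · rcases List.mem_cons.mp hx with rfl | hx
      · exact List.mem_cons_self
      · exact List.mem_cons_of_mem _ (ih _ (by simp) hx)

lemma mem_of_mem_PLE {S : Finset V} {x : V} {l : List V} (h : x ∈ PLE S l) : x ∈ l :=
  mem_of_mem_PLE_aux l h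

lemma getLast?_cons_of_ne_nil (a : V) {t : List V} (h : t ≠ []) :
    (a :: t).getLast? = t.getLast? := by
  cases t with
  | nil => exact absurd rfl h
  | cons b s => exact List.getLast?_cons_cons

lemma getLast?_PLE (S : Finset V) : ∀ l : List V, (PLE S l).getLast? = l.getLast? := by
  refine list_length_ind _ (fun l ih => ?_)
  cases l with
  | nil => rw [PLE_nil]
  | cons a r =>
    rw [PLE_cons]
    split_ifs with h1 h2 h3
    · rw [List.getLast?_eq_getLast (List.cons_ne_nil a r), ← h2]; rfl
    · have hr : r ≠ [] := by
        rintro rfl; exact h2 (by simp)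
      have hga : r.getLast? ≠ some a := by
        rw [List.getLast?_eq_getLast hr]
        intro hc
        exact h2 (by rw [List.getLast_cons hr]; exact (Option.some_injective _ hc).symm)
      have hd : (dropToLastOcc a r).getLast? = r.getLast? := getLast?_dropToLastOcc hga
      have hdne : dropToLastOcc a r ≠ [] := by
        intro hc
        rw [hc] at hd
        exact hr (List.getLast?_eq_none_iff.mp hd.symm)
      rw [getLast?_cons_of_ne_nil a (PLE_ne_nil S hdne),
        ih _ (by simpa using Nat.lt_succ_of_le (dropToLastOcc_length_le a r)), hd,
        getLast?_cons_of_ne_nil a hr]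
    · subst h3; rfl
    · rw [getLast?_cons_of_ne_nil a (PLE_ne_nil S h3), ih _ (by simp),
        getLast?_cons_of_ne_nil a h3]



lemma LE_nil : LE ([] : List V) = [] := PLE_nil _

lemma LE_cons (a : V) (r : List V) :
    LE (a :: r) = if a = (a :: r).getLast (List.cons_ne_nil a r) then [a]
      else a :: LE (dropToLastOcc a r) := by
  show PLE Finset.univ _ = _
  rw [PLE_cons]
  simp only [Finset.mem_univ, if_true]
  rfl

lemma head?_LE (l : List V) : (LE l).head? = l.head? := head?_PLE _ l
lemma getLast?_LE (l : List V) : (LE l).getLast? = l.getLast? := getLast?_PLE _ l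
lemma LE_ne_nil {l : List V} (h : l ≠ []) : LE l ≠ [] := PLE_ne_nil _ h
lemma mem_of_mem_LE {x : V} {l : List V} (h : x ∈ LE l) : x ∈ l := mem_of_mem_PLE h

lemma LE_cons_of_not_mem {x : V} {r : List V} (hx : x ∉ r) (hr : r ≠ []) :
    LE (x :: r) = x :: LE r := by
  rw [LE_cons]
  have hg : (x :: r).getLast (List.cons_ne_nil x r) = r.getLast hr := List.getLast_cons hr
  rw [if_neg, dropToLastOcc_of_not_mem hx]
  rw [hg]
  intro hc
  exact hx (hc ▸ List.getLast_mem hr)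

lemma LE_nodup : ∀ l : List V, (LE l).Nodup := by
  refine list_length_ind _ (fun l ih => ?_)
  cases l with
  | nil => rw [LE_nil]; exact List.nodup_nil
  | cons a r =>
    rw [LE_cons]
    split_ifs with h1
    · simp
    · refine List.nodup_cons.mpr ⟨fun hc => ?_,
        ih _ (by simpa using Nat.lt_succ_of_le (dropToLastOcc_length_le a r))⟩
      exact not_mem_dropToLastOcc a r (mem_of_mem_LE hc)

lemma LE_append_left : ∀ A : List V, ∀ {t : List V}, A.Nodup → (∀ x ∈ A, x ∉ t) → t ≠ [] →
    LE (A ++ t) = A ++ LE t := by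
  intro A
  induction A with
  | nil => intro t _ _ _; rfl
  | cons x A ih =>
    intro t hnd hdisj ht
    have hx : x ∉ A ++ t := by
      intro hc
      rcases List.mem_append.mp hc with h | h
      · exact (List.nodup_cons.mp hnd).1 h
      · exact hdisj x (List.mem_cons_self) h
    rw [List.cons_append, LE_cons_of_not_mem hx (by simp [ht]),
      ih (List.nodup_cons.mp hnd).2 (fun y hy => hdisj y (List.mem_cons_of_mem _ hy)) ht]
    rfl


lemma LE_singleton (a : V) : LE [a] = [a] := by
  rw [LE_cons]; simp

lemma LE_concat {a : V} : ∀ m : List V, a ∉ m → m ≠ [] → LE (m ++ [a]) = LE m ++ [a] := by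
  refine list_length_ind _ (fun m ih => ?_)
  cases m with
  | nil => intro _ h; exact absurd rfl h
  | cons x m' =>
    intro ha _
    have hax : a ≠ x := by intro hc; exact ha (hc ▸ List.mem_cons_self)
    have ham' : a ∉ m' := fun hc => ha (List.mem_cons_of_mem _ hc)
    rw [List.cons_append, LE_cons]
    split_ifs with h
    · exfalso
      have : (x :: (m' ++ [a])).getLast (List.cons_ne_nil _ _) = a := by
        have := List.getLast_concat (l := x :: m') (a := a)
        simpa using this
      exact hax (by rw [← this, ← h])
    · rw [dropToLastOcc_append_singleton hax m']
      by_cases hd : dropToLastOcc x m' = []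
      · rw [hd, List.nil_append, LE_singleton]
        have hR : LE (x :: m') = [x] := by
          by_cases hm' : m' = []
          · subst hm'; exact LE_singleton x
          · have hm'x : m'.getLast? = some x := by
              by_contra hc
              have := getLast?_dropToLastOcc hc
              rw [hd] at this
              exact hm' (List.getLast?_eq_none_iff.mp this.symm)
            have hg : (x :: m').getLast (List.cons_ne_nil x m') = x := by
              rw [List.getLast_cons hm']
              exact (Option.some_injective _
                (by rw [← List.getLast?_eq_getLast hm', hm'x])).symm
            rw [LE_cons]
            split_ifs with h2
            · rfl
            · exact absurd hg.symm h2
        rw [hR]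
        rfl
      · have hm' : m' ≠ [] := by rintro rfl; exact hd (by simp [dropToLastOcc])
        have hm'x : m'.getLast? ≠ some x := fun hc => hd (dropToLastOcc_eq_nil hc)
        have hxgl : x ≠ (x :: m').getLast (List.cons_ne_nil x m') := by
          rw [List.getLast_cons hm']
          intro hc
          exact hm'x (by rw [List.getLast?_eq_getLast hm', ← hc])
        have hadrop : a ∉ dropToLastOcc x m' := fun hc =>
          ham' ((dropToLastOcc_suffix x m').subset hc)
        rw [ih _ (by simpa using Nat.lt_succ_of_le (dropToLastOcc_length_le x m')) hadrop hd]
        have hR : LE (x :: m') = x :: LE (dropToLastOcc x m') := by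
          rw [LE_cons]
          split_ifs with h2
          · exact absurd h2 hxgl
          · rfl
        rw [hR]
        rfl


section K
variable {b : V}

lemma LE_cons_ne {a : V} {r : List V} (hg : a ≠ (a :: r).getLast (List.cons_ne_nil a r)) :
    LE (a :: r) = a :: LE (dropToLastOcc a r) := by
  rw [LE_cons]
  split_ifs with h
  · exact absurd h hg
  · rfl

lemma LE_cons_eq {a : V} {r : List V} (hg : a = (a :: r).getLast (List.cons_ne_nil a r)) :
    LE (a :: r) = [a] := by
  rw [LE_cons, if_pos hg]

lemma dropToLastOcc_ne_nil_of_getLast {a : V} {r : List V} (hr : r ≠ [])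
    (hg : a ≠ (a :: r).getLast (List.cons_ne_nil a r)) : dropToLastOcc a r ≠ [] := by
  have hra : r.getLast? ≠ some a := by
    intro hra
    apply hg
    rw [List.getLast_cons hr]
    exact (Option.some_injective _ (by rw [← List.getLast?_eq_getLast hr, hra])).symm
  intro hc
  have := getLast?_dropToLastOcc hra
  rw [hc] at this
  exact hr (List.getLast?_eq_none_iff.mp this.symm)

lemma LE_PLE_of_not_mem : ∀ l : List V, b ∉ LE l → LE (PLE (Finset.univ \ {b}) l) = LE l := by
  refine list_length_ind _ (fun l ih => ?_)
  cases l with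
  | nil => intro _; rw [PLE_nil, LE_nil]
  | cons a r =>
    intro hb
    have hmem : a ∈ LE (a :: r) := List.mem_of_mem_head? (by rw [head?_LE]; rfl)
    have hab : a ≠ b := fun hc => hb (hc ▸ hmem)
    rw [PLE_cons]
    rw [if_pos (by simp [hab] : a ∈ Finset.univ \ {b})]
    by_cases hg : a = (a :: r).getLast (List.cons_ne_nil a r)
    · rw [if_pos hg, LE_singleton, LE_cons_eq hg]
    · rw [if_neg hg]
      have hr : r ≠ [] := by rintro rfl; exact hg (by simp)
      have hLE := LE_cons_ne hg
      rw [hLE] at hb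
      have hbd : b ∉ LE (dropToLastOcc a r) := fun hc => hb (List.mem_cons_of_mem _ hc)
      have hdne : dropToLastOcc a r ≠ [] := dropToLastOcc_ne_nil_of_getLast hr hg
      have hand : a ∉ PLE (Finset.univ \ {b}) (dropToLastOcc a r) := fun hc =>
        not_mem_dropToLastOcc a r (mem_of_mem_PLE hc)
      rw [LE_cons_of_not_mem hand (PLE_ne_nil _ hdne),
        ih _ (by simpa using Nat.lt_succ_of_le (dropToLastOcc_length_le a r)) hbd, hLE]

lemma LE_reverse_PLE : ∀ u : List V, u ≠ [] → u.getLast? = some b →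
    LE (PLE (Finset.univ \ {b}) u).reverse = (LE u).reverse := by
  refine list_length_ind _ (fun u ih => ?_)
  cases u with
  | nil => intro h; exact absurd rfl h
  | cons a r =>
    intro _ hgl
    by_cases hab : a = b
    · subst hab
      have hga : (a :: r).getLast (List.cons_ne_nil a r) = a := by
        have h2 := List.getLast?_eq_getLast (List.cons_ne_nil a r)
        rw [hgl] at h2
        exact (Option.some_injective _ h2.symm)
      rw [LE_cons_eq hga.symm, PLE_cons, if_neg (by simp)]
      by_cases hr : r = []
      · subst hr; rw [if_pos rfl]; simp [LE_singleton]
      · rw [if_neg hr]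
        have hrg : r.getLast? = some a := by rw [← getLast?_cons_of_ne_nil a hr, hgl]
        have hhead : ((PLE (Finset.univ \ {a}) r).reverse).head? = some a := by
          rw [List.head?_reverse, getLast?_PLE]; exact hrg
        obtain ⟨t, ht⟩ : ∃ t, (PLE (Finset.univ \ {a}) r).reverse = a :: t :=
          ⟨_, (List.cons_head?_tail hhead).symm⟩
        rw [List.reverse_cons, ht, List.cons_append]
        have hgt : (a :: (t ++ [a])).getLast (List.cons_ne_nil _ _) = a := by
          have h3 := List.getLast_concat (l := a :: t) (a := a)
          simpa using h3
        rw [LE_cons_eq hgt.symm]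
        simp
    · have hr : r ≠ [] := by
        rintro rfl
        exact hab (Option.some_injective _ (by simpa using hgl))
      have hrg : r.getLast? = some b := by rw [← getLast?_cons_of_ne_nil a hr, hgl]
      have hrga : r.getLast? ≠ some a := by
        rw [hrg]; intro hc; exact hab (Option.some_injective _ hc).symm
      have hg : a ≠ (a :: r).getLast (List.cons_ne_nil a r) := by
        rw [List.getLast_cons hr]
        intro hc
        apply hrga
        rw [List.getLast?_eq_getLast hr, ← hc]
      have hd : (dropToLastOcc a r).getLast? = some b := by
        rw [getLast?_dropToLastOcc hrga, hrg]
      have hdne : dropToLastOcc a r ≠ [] := dropToLastOcc_ne_nil_of_getLast hr hg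
      rw [PLE_cons, if_pos (by simp [hab] : a ∈ Finset.univ \ {b}), if_neg hg,
        LE_cons_ne hg, List.reverse_cons, List.reverse_cons]
      have hna : a ∉ (PLE (Finset.univ \ {b}) (dropToLastOcc a r)).reverse := by
        rw [List.mem_reverse]
        exact fun hc => not_mem_dropToLastOcc a r (mem_of_mem_PLE hc)
      rw [LE_concat _ hna (by simpa using PLE_ne_nil _ hdne),
        ih _ (by simpa using Nat.lt_succ_of_le (dropToLastOcc_length_le a r)) hdne hd]

lemma LEsuffixAt_nil : LEsuffixAt b ([] : List V) = [] := by rw [LEsuffixAt]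

lemma LEsuffixAt_cons (a : V) (r : List V) :
    LEsuffixAt b (a :: r) = if a = b then a :: r
      else if a = (a :: r).getLast (List.cons_ne_nil a r) then []
      else LEsuffixAt b (dropToLastOcc a r) := by rw [LEsuffixAt]

lemma LEsuffixAt_suffix : ∀ l : List V, LEsuffixAt b l <:+ l := by
  refine list_length_ind _ (fun l ih => ?_)
  cases l with
  | nil => rw [LEsuffixAt_nil]
  | cons a r =>
    rw [LEsuffixAt_cons]
    split_ifs with h1 h2
    · exact List.suffix_rfl
    · exact List.nil_suffix
    · exact (ih _ (by simpa using Nat.lt_succ_of_le (dropToLastOcc_length_le a r))).trans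
        ((dropToLastOcc_suffix a r).trans (List.suffix_cons a r))

lemma LE_decomp : ∀ w : List V, w ≠ [] →
    (b ∉ LE w ∧ LEsuffixAt b w = []) ∨
    (LEsuffixAt b w ≠ [] ∧ (LEsuffixAt b w).head? = some b ∧
      (LEsuffixAt b w).getLast? = w.getLast? ∧
      ∃ A : List V, b ∉ A ∧ (∀ x ∈ A, x ∉ LEsuffixAt b w) ∧
        LE w = A ++ LE (LEsuffixAt b w)) := by
  refine list_length_ind _ (fun w ih => ?_)
  cases w with
  | nil => intro h; exact absurd rfl h
  | cons a r =>
    intro _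
    rw [LEsuffixAt_cons]
    split_ifs with h1 h2
    · subst h1
      exact Or.inr ⟨List.cons_ne_nil _ _, rfl, rfl, [], by simp, by simp, rfl⟩
    · refine Or.inl ⟨?_, rfl⟩
      rw [LE_cons_eq h2]
      simp only [List.mem_singleton]
      exact fun hc => h1 hc.symm
    · have hr : r ≠ [] := by rintro rfl; exact h2 (by simp)
      have hdne : dropToLastOcc a r ≠ [] := dropToLastOcc_ne_nil_of_getLast hr h2
      have hlt : (dropToLastOcc a r).length < (a :: r).length := by
        simpa using Nat.lt_succ_of_le (dropToLastOcc_length_le a r)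
      have hLE := LE_cons_ne h2
      rcases ih _ hlt hdne with ⟨hb, hnil⟩ | ⟨hs, hhd, hgl, A, hbA, hdisj, hdec⟩
      · refine Or.inl ⟨?_, hnil⟩
        rw [hLE]
        intro hc
        rcases List.mem_cons.mp hc with hc | hc
        · exact h1 hc.symm
        · exact hb hc
      · refine Or.inr ⟨hs, hhd, ?_, a :: A, ?_, ?_, ?_⟩
      
        · rw [hgl, getLast?_dropToLastOcc, getLast?_cons_of_ne_nil a hr]
          intro hc
          apply h2
          rw [List.getLast_cons hr]
          exact (Option.some_injective _ (by rw [← List.getLast?_eq_getLast hr, hc])).symm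
        · intro hc
          rcases List.mem_cons.mp hc with hc | hc
          · exact h1 hc.symm
          · exact hbA hc
        · intro x hx
          rcases List.mem_cons.mp hx with rfl | hx
          · exact fun hc =>
              not_mem_dropToLastOcc x r ((LEsuffixAt_suffix _).subset hc)
          · exact hdisj x hx
        · rw [hLE, hdec]
          rfl

lemma takeWhile_ne_append {b : V} : ∀ A : List V, b ∉ A → ∀ t : List V,
    List.takeWhile (fun z => z ≠ b) (A ++ b :: t) = A := by
  intro A
  induction A with
  | nil => intro _ t; simp
  | cons x A ihA =>
    intro h t
    simp only [List.mem_cons, not_or] at h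
    have hx : (fun z => decide (z ≠ b)) x = true :=
      decide_eq_true (show x ≠ b from fun hc => h.1 hc.symm)
    rw [List.cons_append, List.takeWhile_cons, if_pos hx, ihA h.2 t]

end K

variable [MeasurableSpace V]

/-- The trace process `X̃_n = X_{τ̊_W^{(n)} ∧ τ_A}` (so `X̃_0 = X_0`). -/
noncomputable def traceProc (W A : Finset V) (ω : ℕ → V) (n : ℕ) : V :=
  ω (traceTime W A ω n)

/-- The Green function `G_B(x, y) = 𝔼_x(#{0 ≤ n < τ_{V∖B} : X_n = y})`. -/
noncomputable def green (μ : V → Measure (ℕ → V)) (B : Finset V) (x y : V) : ℝ :=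
  ∑' n : ℕ, (μ x {ω | ω n = y ∧ ∀ k ≤ n, ω k ∈ B}).toReal

theorem algorithm_one_eq_algorithm_two
    {V : Type*} [Fintype V] [DecidableEq V]
    (w : List V) (hw : w ≠ []) (b : V) (hb : b ≠ w.getLast hw) :
    (if b ∈ LE w then
        ((LE w).takeWhile (fun z => z ≠ b) ++ [b]) ++
          ((LE (LEsuffixAt b w).reverse).reverse).tail
      else LE w) =
      LE (if b ∈ LE w then
            ((LE w).takeWhile (fun z => z ≠ b) ++ [b]) ++
              ((PLE (Finset.univ \ {b}) (LEsuffixAt b w).reverse).reverse).tail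
          else PLE (Finset.univ \ {b}) w) := by
  by_cases hmem : b ∈ LE w
  · rw [if_pos hmem, if_pos hmem]
    rcases LE_decomp w hw with ⟨hb', _⟩ | ⟨hs, hhd, hgl, A, hbA, hdisj, hdec⟩
    · exact absurd hmem hb'
    set s := LEsuffixAt b w with hsdef
    set u := s.reverse with hudef
    have hu : u ≠ [] := by simpa [hudef] using hs
    have hugl : u.getLast? = some b := by rw [hudef, List.getLast?_reverse]; exact hhd
    have hLEs : (LE s).head? = some b := by rw [head?_LE]; exact hhd
    have htake : (LE w).takeWhile (fun z => z ≠ b) = A := by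
      rw [hdec, ← List.cons_head?_tail hLEs]
      exact takeWhile_ne_append A hbA _
    have hP : ((PLE (Finset.univ \ {b}) u).reverse).head? = some b := by
      rw [List.head?_reverse, getLast?_PLE, hugl]
    have hLu : ((LE u).reverse).head? = some b := by
      rw [List.head?_reverse, getLast?_LE, hugl]
    have hAnd : A.Nodup := by
      have := LE_nodup w
      rw [hdec] at this
      exact this.of_append_left
    have hdisj' : ∀ x ∈ A, x ∉ (PLE (Finset.univ \ {b}) u).reverse := by
      intro x hx hc
      exact hdisj x hx (by
        have h1 : x ∈ u := mem_of_mem_PLE (List.mem_reverse.mp hc)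
        rwa [hudef, List.mem_reverse] at h1)
    have hne : (PLE (Finset.univ \ {b}) u).reverse ≠ [] := by
      simpa using PLE_ne_nil _ hu
    rw [htake, List.append_assoc, List.singleton_append,
      List.cons_head?_tail hLu, List.append_assoc, List.singleton_append,
      List.cons_head?_tail hP,
      LE_append_left A hAnd hdisj' hne,
      LE_reverse_PLE u hu hugl]
  · rw [if_neg hmem, if_neg hmem]
    exact (LE_PLE_of_not_mem w hmem).symm

end LERW
end

section
/- Let (Ω, X_n, ℙ_x) be a Markov chain on a nonempty finite set V, let B ⊆ V with B ≠ V satisfy ℙ_z(τ_{V∖B} < ∞) = 1 for every z ∈ B, and let x, y ∈ B with x ≠ y. Then G_{B∖{y}}(x,x) · G_B(y,y) = G_B(x,x) · G_{B∖{x}}(y,y). -/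
open MeasureTheory

namespace LERW

variable {V : Type*} [DecidableEq V]

variable [Fintype V]

variable [MeasurableSpace V]

/-! ### Auxiliary material for the cross-product identity -/

section GreenAux

set_option linter.unusedSectionVars false in
/-- helper -/
example : True := trivial

variable {W : Type*} [Fintype W] [DecidableEq W]

/-- The substochastic kernel restricted to `B`, as a matrix. -/
def Qm (P : W → W → ℝ) (B : Finset W) : Matrix W W ℝ :=
  fun a b => if a ∈ B ∧ b ∈ B then P a b else 0

set_option linter.unusedSectionVars false

lemma Qm_nonneg {P : W → W → ℝ} (hP0 : ∀ a b : W, 0 ≤ P a b) (B : Finset W) (a b : W) :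
    0 ≤ Qm P B a b := by
  unfold Qm; split <;> simp [hP0]

lemma Qm_le_P {P : W → W → ℝ} (hP0 : ∀ a b : W, 0 ≤ P a b) (B : Finset W) (a b : W) :
    Qm P B a b ≤ P a b := by
  unfold Qm; split <;> simp [hP0]

lemma Qm_mono {P : W → W → ℝ} (hP0 : ∀ a b : W, 0 ≤ P a b) {A B : Finset W} (hAB : A ⊆ B)
    (a b : W) : Qm P A a b ≤ Qm P B a b := by
  unfold Qm
  by_cases h : a ∈ A ∧ b ∈ A
  · rw [if_pos h, if_pos ⟨hAB h.1, hAB h.2⟩]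
  · rw [if_neg h]; split <;> simp [hP0]

lemma Qm_zero_right {P : W → W → ℝ} {B : Finset W} {b : W} (hb : b ∉ B) (a : W) :
    Qm P B a b = 0 := by
  unfold Qm; rw [if_neg (by tauto)]

lemma Qm_zero_left {P : W → W → ℝ} {B : Finset W} {a : W} (ha : a ∉ B) (b : W) :
    Qm P B a b = 0 := by
  unfold Qm; rw [if_neg (by tauto)]

lemma Qm_erase_eq {P : W → W → ℝ} {B : Finset W} {y a b : W} (ha : a ≠ y) (hb : b ≠ y) :
    Qm P (B.erase y) a b = Qm P B a b := by
  unfold Qm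
  simp [Finset.mem_erase, ha, hb]

lemma pow_entry_nonneg {M : Matrix W W ℝ} (hM : ∀ a b, 0 ≤ M a b) :
    ∀ (n : ℕ) (a b : W), 0 ≤ (M ^ n) a b := by
  intro n
  induction n with
  | zero => intro a b; rw [pow_zero, Matrix.one_apply]; split <;> norm_num
  | succ n ih =>
      intro a b
      rw [pow_succ, Matrix.mul_apply]
      exact Finset.sum_nonneg fun c _ => mul_nonneg (ih a c) (hM c b)

lemma pow_entry_mono {M N : Matrix W W ℝ} (hM : ∀ a b, 0 ≤ M a b)
    (h : ∀ a b, M a b ≤ N a b) : ∀ (n : ℕ) (a b : W), (M ^ n) a b ≤ (N ^ n) a b := by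
  intro n
  induction n with
  | zero => intro a b; rw [pow_zero, pow_zero]
  | succ n ih =>
      intro a b
      rw [pow_succ, pow_succ, Matrix.mul_apply, Matrix.mul_apply]
      refine Finset.sum_le_sum fun c _ => ?_
      exact mul_le_mul (ih a c) (h c b) (hM c b)
        (pow_entry_nonneg (fun a b => (hM a b).trans (h a b)) n a c)

lemma pow_zero_right {P : W → W → ℝ} {B : Finset W} {b : W} (hb : b ∉ B) (n : ℕ) (a : W) :
    (Qm P B ^ (n + 1)) a b = 0 := by
  rw [pow_succ, Matrix.mul_apply]
  exact Finset.sum_eq_zero fun c _ => by rw [Qm_zero_right hb, mul_zero]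

lemma pow_zero_left {P : W → W → ℝ} {B : Finset W} {a : W} (ha : a ∉ B) (n : ℕ) (b : W) :
    (Qm P B ^ (n + 1)) a b = 0 := by
  rw [pow_succ', Matrix.mul_apply]
  exact Finset.sum_eq_zero fun c _ => by rw [Qm_zero_left ha, zero_mul]

lemma pow_eq_pathsum (M : Matrix W W ℝ) : ∀ (n : ℕ) (a b : W), (M ^ n) a b =
    ∑ v : Fin (n + 1) → W, (if a = v 0 then (1 : ℝ) else 0) *
      ((if v (Fin.last n) = b then (1 : ℝ) else 0) *
        ∏ j : Fin n, M (v j.castSucc) (v j.succ)) := by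
  intro n
  induction n with
  | zero =>
      intro a b
      rw [pow_zero, Matrix.one_apply]
      rw [← (Equiv.funUnique (Fin 1) W).symm.sum_comp]
      simp [Equiv.funUnique, mul_ite, ite_mul, Finset.sum_ite_eq]
  | succ n ih =>
      intro a b
      rw [pow_succ', Matrix.mul_apply]
      simp only [ih]
      rw [← (Fin.consEquiv (fun _ : Fin (n+2) => W)).sum_comp, Fintype.sum_prod_type]
      have hterm : ∀ (a' : W) (w : Fin (n+1) → W),
          (if a = (Fin.cons a' w : Fin (n+2) → W) 0 then (1:ℝ) else 0) *
            ((if (Fin.cons a' w : Fin (n+2) → W) (Fin.last (n+1)) = b then (1:ℝ) else 0) *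
              ∏ j : Fin (n+1), M ((Fin.cons a' w : Fin (n+2) → W) j.castSucc)
                ((Fin.cons a' w : Fin (n+2) → W) j.succ)) =
          (if a = a' then (1:ℝ) else 0) *
            ((if w (Fin.last n) = b then (1:ℝ) else 0) *
              (M a' (w 0) * ∏ j : Fin n, M (w j.castSucc) (w j.succ))) := by
        intro a' w
        rw [Fin.prod_univ_succ]
        rw [show Fin.last (n+1) = (Fin.last n).succ from (Fin.succ_last n).symm]
        rw [Fin.cons_succ, Fin.cons_zero]
        simp only [← Fin.succ_castSucc, Fin.cons_succ, Fin.castSucc_zero, Fin.cons_zero]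
      simp only [Fin.consEquiv_apply]
      simp only [hterm]
      simp only [ite_mul, one_mul, zero_mul, mul_ite, mul_zero, mul_one, Finset.mul_sum]
      rw [Finset.sum_comm (γ := W) (α := Fin (n+1) → W)]
      conv_rhs => rw [Finset.sum_comm (γ := W) (α := Fin (n+1) → W)]
      refine Finset.sum_congr rfl fun v _ => ?_
      by_cases hb' : v (Fin.last n) = b <;>
        simp [hb', mul_ite, mul_zero, Finset.sum_ite_eq, Finset.sum_ite_eq']

lemma prod_Icc_one_eq_range {M : Type*} [CommMonoid M] (f : ℕ → M) (n : ℕ) :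
    ∏ i ∈ Finset.Icc 1 n, f i = ∏ i ∈ Finset.range n, f (i + 1) := by
  induction n with
  | zero => simp
  | succ n ih =>
      rw [Finset.prod_Icc_succ_top (Nat.one_le_iff_ne_zero.mpr (Nat.succ_ne_zero n)), ih,
        Finset.prod_range_succ]

/-- First-passage decomposition of matrix powers. -/
lemma pow_decomp (P : W → W → ℝ) (B : Finset W) (y : W) (b : W) :
    ∀ (n : ℕ) (a : W), a ≠ y →
      (Qm P B ^ n) a b = (Qm P (B.erase y) ^ n) a b +
        ∑ k ∈ Finset.range n,
          ((Qm P (B.erase y) ^ k * Qm P B) a y) * ((Qm P B ^ (n - 1 - k)) y b) := by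
  intro n
  induction n with
  | zero => intro a _; simp
  | succ n ih =>
      intro a hay
      set Q := Qm P B with hQ
      set Q' := Qm P (B.erase y) with hQ'
      have hQ'ay : ∀ c, Q' c y = 0 := fun c => Qm_zero_right (Finset.notMem_erase y B) c
      rw [pow_succ', Matrix.mul_apply]
      rw [Finset.sum_eq_sum_sdiff_singleton_add (Finset.mem_univ y)]
      have hsplit : ∀ z ∈ Finset.univ \ {y}, Q a z * (Q ^ n) z b =
          Q' a z * ((Q' ^ n) z b) +
            Q' a z * (∑ k ∈ Finset.range n, ((Q' ^ k * Q) z y) * ((Q ^ (n - 1 - k)) y b)) := by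
        intro z hz
        have hzy : z ≠ y := by
          simp only [Finset.mem_sdiff, Finset.mem_singleton] at hz
          exact hz.2
        rw [ih z hzy, show Q a z = Q' a z from (Qm_erase_eq hay hzy).symm, mul_add]
      rw [Finset.sum_congr rfl hsplit, Finset.sum_add_distrib]
      have h1 : ∑ z ∈ Finset.univ \ {y}, Q' a z * (Q' ^ n) z b = (Q' ^ (n + 1)) a b := by
        rw [pow_succ', Matrix.mul_apply,
          Finset.sum_eq_sum_sdiff_singleton_add (Finset.mem_univ y), hQ'ay, zero_mul, add_zero]
      have h2 : ∑ z ∈ Finset.univ \ {y},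
            Q' a z * (∑ k ∈ Finset.range n, ((Q' ^ k * Q) z y) * ((Q ^ (n - 1 - k)) y b)) =
          ∑ k ∈ Finset.range n, ((Q' ^ (k + 1) * Q) a y) * ((Q ^ (n - 1 - k)) y b) := by
        have step : ∀ z ∈ Finset.univ \ {y}, Q' a z *
              (∑ k ∈ Finset.range n, ((Q' ^ k * Q) z y) * ((Q ^ (n - 1 - k)) y b)) =
            ∑ k ∈ Finset.range n, Q' a z * ((Q' ^ k * Q) z y) * ((Q ^ (n - 1 - k)) y b) := by
          intro z _
          rw [Finset.mul_sum]
          exact Finset.sum_congr rfl fun k _ => by ring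
        rw [Finset.sum_congr rfl step, Finset.sum_comm]
        refine Finset.sum_congr rfl fun k _ => ?_
        rw [← Finset.sum_mul]
        congr 1
        have hfull : ∑ z ∈ Finset.univ \ {y}, Q' a z * ((Q' ^ k * Q) z y) =
            ∑ z : W, Q' a z * ((Q' ^ k * Q) z y) := by
          rw [Finset.sum_eq_sum_sdiff_singleton_add (Finset.mem_univ y)
            (fun z => Q' a z * ((Q' ^ k * Q) z y)), hQ'ay, zero_mul, add_zero]
        rw [hfull, ← Matrix.mul_apply, ← mul_assoc, ← pow_succ']
      rw [h1, h2]
      have h3 : Q a y * (Q ^ n) y b = ((Q' ^ 0 * Q) a y) * ((Q ^ (n + 1 - 1 - 0)) y b) := by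
        rw [pow_zero, Matrix.one_mul]
        norm_num
      have h4 : ∀ k : ℕ, n + 1 - 1 - (k + 1) = n - 1 - k := by omega
      rw [Finset.sum_range_succ' (fun k => ((Q' ^ k * Q) a y) * ((Q ^ (n + 1 - 1 - k)) y b)) n]
      have h5 : ∑ k ∈ Finset.range n, ((Q' ^ (k + 1) * Q) a y) * ((Q ^ (n - 1 - k)) y b) =
          ∑ k ∈ Finset.range n, ((Q' ^ (k + 1) * Q) a y) * ((Q ^ (n + 1 - 1 - (k + 1))) y b) := by
        refine Finset.sum_congr rfl fun k _ => ?_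
        rw [h4 k]
      rw [h5, h3, add_assoc]

/-- The main first-passage decomposition at the level of Green functions. -/
lemma tsum_decomp {P : W → W → ℝ} (hP0 : ∀ a b : W, 0 ≤ P a b) (B : Finset W)
    (x y' b : W) (hx : x ∈ B) (hy : y' ∈ B) (hb : b ∈ B) (hxy : x ≠ y')
    (hsum : ∀ a b : W, a ∈ B → b ∈ B → Summable (fun n => (Qm P B ^ n) a b)) :
    ∑' n, (Qm P B ^ n) x b = (∑' n, (Qm P (B.erase y') ^ n) x b)
      + (∑' k, ((Qm P (B.erase y') ^ k * Qm P B) x y')) * ∑' m, (Qm P B ^ m) y' b := by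
  classical
  set Q := Qm P B with hQ
  set Q' := Qm P (B.erase y') with hQ'
  have hQnn : ∀ a b, 0 ≤ Q a b := Qm_nonneg hP0 B
  have hQ'nn : ∀ a b, 0 ≤ Q' a b := Qm_nonneg hP0 (B.erase y')
  have hQ'le : ∀ a b, Q' a b ≤ Q a b := Qm_mono hP0 (Finset.erase_subset y' B)
  set F : ℕ → ℝ := fun k => (Q' ^ k * Q) x y' with hF
  set h : ℕ → ℝ := fun m => (Q ^ m) y' b with hh
  set A : ℕ → ℝ := fun n => (Q' ^ n) x b with hA
  set Bn : ℕ → ℝ := fun n => ∑ k ∈ Finset.range n, F k * h (n - 1 - k) with hBn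
  have hF_nonneg : ∀ k, 0 ≤ F k := by
    intro k
    rw [hF]
    simp only [Matrix.mul_apply]
    exact Finset.sum_nonneg fun c _ =>
      mul_nonneg (pow_entry_nonneg hQ'nn k x c) (hQnn c y')
  have hh_nonneg : ∀ m, 0 ≤ h m := fun m => pow_entry_nonneg hQnn m y' b
  have hA_sum : Summable A := by
    refine Summable.of_nonneg_of_le (fun n => pow_entry_nonneg hQ'nn n x b)
      (fun n => pow_entry_mono hQ'nn hQ'le n x b) (hsum x b hx hb)
  have hh_sum : Summable h := hsum y' b hy hb
  have hF_sum : Summable F := by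
    have heq : F = fun k => ∑ c : W, (Q' ^ k) x c * Q c y' := by
      funext k; rw [hF]; simp only [Matrix.mul_apply]
    rw [heq]
    apply summable_sum
    intro c _
    by_cases hc : c ∈ B
    · refine Summable.of_nonneg_of_le
        (fun k => mul_nonneg (pow_entry_nonneg hQ'nn k x c) (hQnn c y'))
        (fun k => mul_le_mul_of_nonneg_right (pow_entry_mono hQ'nn hQ'le k x c) (hQnn c y'))
        ((hsum x c hx hc).mul_right (Q c y'))
    · have hzero : (fun k => (Q' ^ k) x c * Q c y') = fun _ => 0 := by
        funext k; rw [hQ, Qm_zero_left hc, mul_zero]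
      rw [hzero]
      exact summable_zero
  have hFnorm : Summable (fun k => ‖F k‖) := by
    have : (fun k => ‖F k‖) = F := funext fun k => Real.norm_of_nonneg (hF_nonneg k)
    rwa [this]
  have hhnorm : Summable (fun m => ‖h m‖) := by
    have : (fun m => ‖h m‖) = h := funext fun m => Real.norm_of_nonneg (hh_nonneg m)
    rwa [this]
  set c : ℕ → ℝ := fun m => ∑ k ∈ Finset.range (m + 1), F k * h (m - k) with hc
  have hc_sum : Summable c :=
    (summable_norm_sum_mul_range_of_summable_norm hFnorm hhnorm).of_norm
  have hprod : (∑' k, F k) * (∑' m, h m) = ∑' m, c m :=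
    tsum_mul_tsum_eq_tsum_sum_range_of_summable_norm hFnorm hhnorm
  have hBn_eq : ∀ m, Bn (m + 1) = c m := by
    intro m
    rw [hBn, hc]
    refine Finset.sum_congr rfl fun k _ => ?_
    rw [show m + 1 - 1 - k = m - k from by omega]
  have hBn_sum : Summable Bn := by
    apply (summable_nat_add_iff 1).mp
    have : (fun n => Bn (n + 1)) = c := funext hBn_eq
    rwa [this]
  calc ∑' n, (Q ^ n) x b = ∑' n, (A n + Bn n) :=
        tsum_congr fun n => pow_decomp P B y' b n x hxy
    _ = (∑' n, A n) + ∑' n, Bn n := Summable.tsum_add hA_sum hBn_sum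
    _ = (∑' n, A n) + (∑' k, F k) * ∑' m, h m := by
        congr 1
        rw [Summable.tsum_eq_zero_add hBn_sum]
        have hB0 : Bn 0 = 0 := by rw [hBn]; simp
        rw [hB0, zero_add, tsum_congr hBn_eq, hprod]

lemma tsum_pow_zero_of_not_mem {P : W → W → ℝ} {B' : Finset W} {x c : W}
    (hxc : x ≠ c) (hc : c ∉ B') : ∑' n, (Qm P B' ^ n) x c = 0 := by
  have hz : ∀ n, (Qm P B' ^ n) x c = 0 := by
    intro n
    cases n with
    | zero => rw [pow_zero, Matrix.one_apply_ne hxc]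
    | succ n =>
        rw [pow_succ, Matrix.mul_apply]
        exact Finset.sum_eq_zero fun d _ => by rw [Qm_zero_right hc, mul_zero]
  rw [tsum_congr hz, tsum_zero]

lemma sB_le_one {P : W → W → ℝ} (hP0 : ∀ a b : W, 0 ≤ P a b)
    (hP1 : ∀ a : W, ∑ b : W, P a b = 1) (B : Finset W) :
    ∀ (n : ℕ) (z : W), ∑ b ∈ B, (Qm P B ^ n) z b ≤ 1 := by
  intro n
  induction n with
  | zero =>
      intro z
      simp only [pow_zero, Matrix.one_apply]
      rw [Finset.sum_ite_eq B z (fun _ => (1:ℝ))]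
      split <;> norm_num
  | succ n ih =>
      intro z
      have expand : ∑ b ∈ B, (Qm P B ^ (n+1)) z b =
          ∑ c : W, Qm P B z c * ∑ b ∈ B, (Qm P B ^ n) c b := by
        rw [Finset.sum_congr rfl fun b _ => by rw [pow_succ', Matrix.mul_apply]]
        rw [Finset.sum_comm]
        exact Finset.sum_congr rfl fun c _ => by rw [Finset.mul_sum]
      rw [expand]
      calc ∑ c : W, Qm P B z c * ∑ b ∈ B, (Qm P B ^ n) c b
          ≤ ∑ c : W, Qm P B z c * 1 := by
            refine Finset.sum_le_sum fun c _ => ?_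
            exact mul_le_mul_of_nonneg_left (ih c) (Qm_nonneg hP0 B z c)
        _ ≤ ∑ c : W, P z c := by
            refine Finset.sum_le_sum fun c _ => ?_
            rw [mul_one]; exact Qm_le_P hP0 B z c
        _ = 1 := hP1 z

lemma sB_nonneg {P : W → W → ℝ} (hP0 : ∀ a b : W, 0 ≤ P a b) (B : Finset W) (n : ℕ) (z : W) :
    0 ≤ ∑ b ∈ B, (Qm P B ^ n) z b :=
  Finset.sum_nonneg fun b _ => pow_entry_nonneg (Qm_nonneg hP0 B) n z b

lemma row_full {P : W → W → ℝ} {B : Finset W} {z : W} (hz : z ∈ B) (m : ℕ) :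
    ∑ c : W, (Qm P B ^ m) z c = ∑ c ∈ B, (Qm P B ^ m) z c := by
  symm
  refine Finset.sum_subset (Finset.subset_univ B) fun c _ hc => ?_
  cases m with
  | zero => rw [pow_zero, Matrix.one_apply_ne (show z ≠ c from fun h => by subst h; exact hc hz)]
  | succ m => exact pow_zero_right hc m z

lemma sB_drop {P : W → W → ℝ} (hP0 : ∀ a b : W, 0 ≤ P a b) {B : Finset W} {N : ℕ}
    (hN : ∀ c : W, ∑ b ∈ B, (Qm P B ^ N) c b ≤ 1/2) {z : W} (hz : z ∈ B) (m : ℕ) :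
    ∑ b ∈ B, (Qm P B ^ (m + N)) z b ≤ (1/2) * ∑ b ∈ B, (Qm P B ^ m) z b := by
  have expand : ∑ b ∈ B, (Qm P B ^ (m + N)) z b =
      ∑ c : W, (Qm P B ^ m) z c * ∑ b ∈ B, (Qm P B ^ N) c b := by
    rw [Finset.sum_congr rfl fun b _ => by rw [pow_add, Matrix.mul_apply]]
    rw [Finset.sum_comm]
    exact Finset.sum_congr rfl fun c _ => by rw [Finset.mul_sum]
  rw [expand]
  calc ∑ c : W, (Qm P B ^ m) z c * ∑ b ∈ B, (Qm P B ^ N) c b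
      ≤ ∑ c : W, (Qm P B ^ m) z c * (1/2) := by
        refine Finset.sum_le_sum fun c _ => ?_
        exact mul_le_mul_of_nonneg_left (hN c) (pow_entry_nonneg (Qm_nonneg hP0 B) m z c)
    _ = (1/2) * ∑ c : W, (Qm P B ^ m) z c := by rw [← Finset.sum_mul, mul_comm]
    _ = (1/2) * ∑ b ∈ B, (Qm P B ^ m) z b := by rw [row_full hz]

lemma summable_sB {P : W → W → ℝ} (hP0 : ∀ a b : W, 0 ≤ P a b)
    (hP1 : ∀ a : W, ∑ b : W, P a b = 1) {B : Finset W} {N : ℕ}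
    (hN : ∀ c : W, ∑ b ∈ B, (Qm P B ^ N) c b ≤ 1/2) {z : W} (hz : z ∈ B) :
    Summable (fun n => ∑ b ∈ B, (Qm P B ^ n) z b) := by
  apply summable_of_sum_range_le (c := 2 * N) (fun n => sB_nonneg hP0 B n z)
  intro K
  have h1 : ∑ n ∈ Finset.range K, ∑ b ∈ B, (Qm P B ^ n) z b ≤
      ∑ n ∈ Finset.range (N + K), ∑ b ∈ B, (Qm P B ^ n) z b := by
    refine Finset.sum_le_sum_of_subset_of_nonneg
      (Finset.range_subset_range.mpr (Nat.le_add_left K N)) fun n _ _ => sB_nonneg hP0 B n z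
  rw [Finset.sum_range_add] at h1
  have h2 : ∑ n ∈ Finset.range N, ∑ b ∈ B, (Qm P B ^ n) z b ≤ N := by
    calc ∑ n ∈ Finset.range N, ∑ b ∈ B, (Qm P B ^ n) z b
        ≤ ∑ n ∈ Finset.range N, (1:ℝ) :=
          Finset.sum_le_sum fun n _ => sB_le_one hP0 hP1 B n z
      _ = N := by simp
  have h3 : ∑ n ∈ Finset.range K, ∑ b ∈ B, (Qm P B ^ (N + n)) z b ≤
      (1/2) * ∑ n ∈ Finset.range K, ∑ b ∈ B, (Qm P B ^ n) z b := by
    rw [Finset.mul_sum]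
    refine Finset.sum_le_sum fun n _ => ?_
    rw [Nat.add_comm N n]
    exact sB_drop hP0 hN hz n
  linarith

variable [MeasurableSpace W] [MeasurableSingletonClass W]

lemma measure_path_event {P : W → W → ℝ} (hP0 : ∀ a b : W, 0 ≤ P a b)
    (μ : W → Measure (ℕ → W))
    (hlaw : ∀ (a : W) (n : ℕ) (y : ℕ → W),
      μ a {ω | ∀ i ≤ n, ω i = y i} =
        ENNReal.ofReal ((if a = y 0 then (1 : ℝ) else 0) *
          ∏ i ∈ Finset.Icc 1 n, P (y (i - 1)) (y i)))
    (B : Finset W) {b : W} (hb : b ∈ B) (a : W) (n : ℕ) :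
    μ a {ω : ℕ → W | ω n = b ∧ ∀ k ≤ n, ω k ∈ B} = ENNReal.ofReal ((Qm P B ^ n) a b) := by
  classical
  set ext : (Fin (n + 1) → W) → ℕ → W :=
    fun v i => if h : i < n + 1 then v ⟨i, h⟩ else b with hext
  set T : Finset (Fin (n + 1) → W) :=
    Finset.univ.filter (fun v => v (Fin.last n) = b ∧ ∀ i, v i ∈ B) with hT
  have hextv : ∀ (v : Fin (n + 1) → W) (i : ℕ) (h : i < n + 1), ext v i = v ⟨i, h⟩ :=
    fun v i h => dif_pos h
  have hE : {ω : ℕ → W | ω n = b ∧ ∀ k ≤ n, ω k ∈ B} =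
      ⋃ v ∈ T, {ω : ℕ → W | ∀ i ≤ n, ω i = ext v i} := by
    ext ω
    simp only [Set.mem_setOf_eq, Set.mem_iUnion, hT, Finset.mem_filter, Finset.mem_univ,
      true_and]
    constructor
    · rintro ⟨h1, h2⟩
      refine ⟨fun i => ω i, ⟨h1, fun i => h2 i (Fin.is_le i)⟩, fun i hi => ?_⟩
      exact (hextv (fun j : Fin (n+1) => ω j.val) i (Nat.lt_succ_of_le hi)).symm
    · rintro ⟨v, ⟨hv1, hv2⟩, hωv⟩
      constructor
      · rw [hωv n (le_refl n), hextv _ n (Nat.lt_succ_self n)]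
        exact hv1
      · intro k hk
        rw [hωv k hk, hextv _ k (Nat.lt_succ_of_le hk)]
        exact hv2 _
  have hdisj : (↑T : Set (Fin (n + 1) → W)).PairwiseDisjoint
      (fun v => {ω : ℕ → W | ∀ i ≤ n, ω i = ext v i}) := by
    intro v _ w _ hvw
    simp only [Function.onFun]
    rw [Set.disjoint_left]
    intro ω hv hw
    apply hvw
    funext i
    have h1 := hv i.val (Fin.is_le i)
    have h2 := hw i.val (Fin.is_le i)
    rw [hextv _ _ (Nat.lt_succ_of_le (Fin.is_le i))] at h1 h2
    rw [show (⟨i.val, _⟩ : Fin (n+1)) = i from Fin.ext rfl] at h1 h2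
    rw [← h1, ← h2]
  have hmeas : ∀ v ∈ T, MeasurableSet {ω : ℕ → W | ∀ i ≤ n, ω i = ext v i} := by
    intro v _
    have hrepr : {ω : ℕ → W | ∀ i ≤ n, ω i = ext v i} =
        ⋂ i ∈ Set.Iic n, (fun ω : ℕ → W => ω i) ⁻¹' {ext v i} := by
      ext ω; simp [Set.mem_iInter]
    rw [hrepr]
    exact MeasurableSet.biInter (Set.to_countable _)
      (fun i _ => measurable_pi_apply i (measurableSet_singleton _))
  rw [hE, measure_biUnion_finset hdisj hmeas]
  have hnn : ∀ v : Fin (n + 1) → W,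
      0 ≤ (if a = ext v 0 then (1:ℝ) else 0) *
        ∏ i ∈ Finset.Icc 1 n, P (ext v (i - 1)) (ext v i) := by
    intro v
    apply mul_nonneg
    · split <;> norm_num
    · exact Finset.prod_nonneg fun i _ => hP0 _ _
  calc ∑ v ∈ T, μ a {ω : ℕ → W | ∀ i ≤ n, ω i = ext v i}
      = ∑ v ∈ T, ENNReal.ofReal ((if a = ext v 0 then (1:ℝ) else 0) *
          ∏ i ∈ Finset.Icc 1 n, P (ext v (i - 1)) (ext v i)) :=
        Finset.sum_congr rfl fun v _ => hlaw a n (ext v)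
    _ = ENNReal.ofReal (∑ v ∈ T, (if a = ext v 0 then (1:ℝ) else 0) *
          ∏ i ∈ Finset.Icc 1 n, P (ext v (i - 1)) (ext v i)) :=
        (ENNReal.ofReal_sum_of_nonneg fun v _ => hnn v).symm
    _ = ENNReal.ofReal ((Qm P B ^ n) a b) := by
        congr 1
        have hterm : ∀ v : Fin (n + 1) → W,
            (if a = ext v 0 then (1:ℝ) else 0) *
              ∏ i ∈ Finset.Icc 1 n, P (ext v (i - 1)) (ext v i) =
            (if a = v 0 then (1:ℝ) else 0) *
              ∏ j : Fin n, P (v j.castSucc) (v j.succ) := by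
          intro v
          congr 1
          · rw [prod_Icc_one_eq_range, ← Fin.prod_univ_eq_prod_range]
            refine Finset.prod_congr rfl fun j _ => ?_
            have e1 : ext v ((j : ℕ) + 1 - 1) = v j.castSucc := by
              simp only [Nat.add_sub_cancel]
              rw [hextv v j.val (Nat.lt_succ_of_lt j.isLt)]
              exact congr_arg v (Fin.ext rfl)
            have e2 : ext v ((j : ℕ) + 1) = v j.succ := by
              rw [hextv v (j.val + 1) (Nat.succ_lt_succ j.isLt)]
              exact congr_arg v (Fin.ext rfl)
            rw [e1, e2]
        rw [Finset.sum_congr rfl fun v _ => hterm v]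
        rw [pow_eq_pathsum (Qm P B) n a b, hT, Finset.sum_filter]
        refine Finset.sum_congr rfl fun v _ => ?_
        by_cases hc1 : v (Fin.last n) = b
        · by_cases hc2 : ∀ i, v i ∈ B
          · rw [if_pos ⟨hc1, hc2⟩, if_pos hc1, one_mul]
            congr 1
            refine Finset.prod_congr rfl fun j _ => ?_
            unfold Qm
            rw [if_pos ⟨hc2 _, hc2 _⟩]
          · rw [if_neg (by tauto), if_pos hc1, one_mul]
            obtain ⟨i, hi⟩ := not_forall.mp hc2
            have hine : i ≠ Fin.last n := by
              intro h; rw [h, hc1] at hi; exact hi hb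
            have hlt : (i : ℕ) < n := Fin.val_lt_last hine
            have hfac : Qm P B (v (⟨i.val, hlt⟩ : Fin n).castSucc)
                (v (⟨i.val, hlt⟩ : Fin n).succ) = 0 := by
              apply Qm_zero_left
              rw [show ((⟨i.val, hlt⟩ : Fin n).castSucc) = i from Fin.ext rfl]
              exact hi
            rw [Finset.prod_eq_zero (Finset.mem_univ (⟨i.val, hlt⟩ : Fin n)) hfac, mul_zero]
        · rw [if_neg (by tauto), if_neg hc1, zero_mul, mul_zero]

open Filter Topology in
lemma exists_N {P : W → W → ℝ} (hP0 : ∀ a b : W, 0 ≤ P a b)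
    (μ : W → Measure (ℕ → W)) (hprob : ∀ a : W, IsProbabilityMeasure (μ a))
    (hlaw : ∀ (a : W) (n : ℕ) (y : ℕ → W),
      μ a {ω | ∀ i ≤ n, ω i = y i} =
        ENNReal.ofReal ((if a = y 0 then (1 : ℝ) else 0) *
          ∏ i ∈ Finset.Icc 1 n, P (y (i - 1)) (y i)))
    (B : Finset W)
    (hexit : ∀ z ∈ B, μ z {ω : ℕ → W | ∃ n : ℕ, ω n ∉ B} = 1) :
    ∃ N : ℕ, 1 ≤ N ∧ ∀ c : W, ∑ b ∈ B, (Qm P B ^ N) c b ≤ 1/2 := by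
  classical
  set A : ℕ → Set (ℕ → W) := fun n => {ω | ∀ k ≤ n, ω k ∈ B} with hA
  have hAmeas : ∀ n, MeasurableSet (A n) := by
    intro n
    have hrepr : A n = ⋂ k ∈ Set.Iic n, (fun ω : ℕ → W => ω k) ⁻¹' (↑B : Set W) := by
      ext ω; simp [hA, Set.mem_iInter]
    rw [hrepr]
    exact MeasurableSet.biInter (Set.to_countable _)
      (fun k _ => measurable_pi_apply k (B.finite_toSet.measurableSet))
  have hAanti : Antitone A := by
    intro m n hmn ω hω k hk
    exact hω k (le_trans hk hmn)
  have hmu : ∀ (z : W) (n : ℕ), μ z (A n) =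
      ENNReal.ofReal (∑ b ∈ B, (Qm P B ^ n) z b) := by
    intro z n
    have hun : A n = ⋃ b ∈ B, {ω : ℕ → W | ω n = b ∧ ∀ k ≤ n, ω k ∈ B} := by
      ext ω
      simp only [hA, Set.mem_setOf_eq, Set.mem_iUnion]
      constructor
      · intro h
        exact ⟨ω n, h n le_rfl, rfl, h⟩
      · rintro ⟨b, _, rfl, h⟩
        exact h
    have hdisj : (↑B : Set W).PairwiseDisjoint
        (fun b => {ω : ℕ → W | ω n = b ∧ ∀ k ≤ n, ω k ∈ B}) := by
      intro b _ c _ hbc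
      simp only [Function.onFun]
      rw [Set.disjoint_left]
      rintro ω ⟨h1, _⟩ ⟨h2, _⟩
      exact hbc (h1 ▸ h2 ▸ rfl)
    have hmeas : ∀ b ∈ B, MeasurableSet {ω : ℕ → W | ω n = b ∧ ∀ k ≤ n, ω k ∈ B} := by
      intro b _
      have hrepr : {ω : ℕ → W | ω n = b ∧ ∀ k ≤ n, ω k ∈ B} =
          ((fun ω : ℕ → W => ω n) ⁻¹' {b}) ∩ A n := by
        ext ω; simp [hA]
      rw [hrepr]
      exact ((measurable_pi_apply n) (measurableSet_singleton b)).inter (hAmeas n)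
    rw [hun, measure_biUnion_finset hdisj hmeas]
    rw [Finset.sum_congr rfl fun b hb => measure_path_event hP0 μ hlaw B hb z n]
    rw [← ENNReal.ofReal_sum_of_nonneg
      (fun b _ => pow_entry_nonneg (Qm_nonneg hP0 B) n z b)]
  have hlimr : ∀ z ∈ B, Tendsto (fun n => ∑ b ∈ B, (Qm P B ^ n) z b) atTop (𝓝 0) := by
    intro z hz
    haveI := hprob z
    have hexitmeas : MeasurableSet {ω : ℕ → W | ∃ n : ℕ, ω n ∉ B} := by
      have hrepr : {ω : ℕ → W | ∃ n : ℕ, ω n ∉ B} =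
          ⋃ n : ℕ, (fun ω : ℕ → W => ω n) ⁻¹' (↑B : Set W)ᶜ := by
        ext ω; simp
      rw [hrepr]
      exact MeasurableSet.iUnion fun n =>
        measurable_pi_apply n (B.finite_toSet.measurableSet.compl)
    have hInter : ⋂ n, A n = {ω : ℕ → W | ∃ n : ℕ, ω n ∉ B}ᶜ := by
      ext ω
      simp only [Set.mem_iInter, hA, Set.mem_setOf_eq, Set.mem_compl_iff, not_exists, not_not]
      constructor
      · intro h k; exact h k k le_rfl
      · intro h n k _; exact h k
    have hzero : μ z (⋂ n, A n) = 0 := by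
      rw [hInter, prob_compl_eq_zero_iff hexitmeas]
      exact hexit z hz
    have hlim : Tendsto (fun n => μ z (A n)) atTop (𝓝 0) := by
      have htend := tendsto_measure_iInter_atTop (μ := μ z)
        (fun n => (hAmeas n).nullMeasurableSet) hAanti ⟨0, measure_ne_top _ _⟩
      rw [hzero] at htend
      exact htend
    have heq : (fun n => ∑ b ∈ B, (Qm P B ^ n) z b) =
        (fun n => (μ z (A n)).toReal) := by
      funext n
      rw [hmu z n, ENNReal.toReal_ofReal (Finset.sum_nonneg
        (fun b _ => pow_entry_nonneg (Qm_nonneg hP0 B) n z b))]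
    rw [heq]
    have hcomp := (ENNReal.tendsto_toReal (a := 0) (by simp)).comp hlim
    exact hcomp
  have hev : ∀ᶠ n in atTop, ∀ z ∈ B, ∑ b ∈ B, (Qm P B ^ n) z b ≤ 1/2 := by
    rw [eventually_all_finset]
    intro z hz
    exact (hlimr z hz).eventually_le_const (by norm_num)
  obtain ⟨N, hN1, hN2⟩ := ((eventually_ge_atTop 1).and hev).exists
  refine ⟨N, hN1, fun c => ?_⟩
  by_cases hc : c ∈ B
  · exact hN2 c hc
  · rw [show N = (N - 1) + 1 by omega]
    rw [Finset.sum_congr rfl fun b _ => pow_zero_left hc (N-1) b]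
    simp

lemma green_eq_tsum {P : W → W → ℝ} (hP0 : ∀ a b : W, 0 ≤ P a b)
    (μ : W → Measure (ℕ → W))
    (hlaw : ∀ (a : W) (n : ℕ) (y : ℕ → W),
      μ a {ω | ∀ i ≤ n, ω i = y i} =
        ENNReal.ofReal ((if a = y 0 then (1 : ℝ) else 0) *
          ∏ i ∈ Finset.Icc 1 n, P (y (i - 1)) (y i)))
    (B : Finset W) {b : W} (hb : b ∈ B) (a : W) :
    green μ B a b = ∑' n, (Qm P B ^ n) a b := by
  unfold green
  exact tsum_congr fun n => by
    rw [measure_path_event hP0 μ hlaw B hb a n,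
      ENNReal.toReal_ofReal (pow_entry_nonneg (Qm_nonneg hP0 B) n a b)]

end GreenAux

theorem green_cross_product_identity
    {V : Type*} [Fintype V] [DecidableEq V] [Nonempty V]
    [MeasurableSpace V] [MeasurableSingletonClass V]
    (P : V → V → ℝ) (μ : V → Measure (ℕ → V))
    (hP0 : ∀ a b : V, 0 ≤ P a b) (hP1 : ∀ a : V, ∑ b : V, P a b = 1)
    (hprob : ∀ a : V, IsProbabilityMeasure (μ a))
    (hlaw : ∀ (a : V) (n : ℕ) (y : ℕ → V),
      μ a {ω | ∀ i ≤ n, ω i = y i} =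
        ENNReal.ofReal ((if a = y 0 then (1 : ℝ) else 0) *
          ∏ i ∈ Finset.Icc 1 n, P (y (i - 1)) (y i)))
    (B : Finset V) (hB : B ≠ Finset.univ)
    (hexit : ∀ z ∈ B, μ z {ω | ∃ n : ℕ, ω n ∉ B} = 1)
    (x y : V) (hx : x ∈ B) (hy : y ∈ B) (hxy : x ≠ y) :
    green μ (B.erase y) x x * green μ B y y = green μ B x x * green μ (B.erase x) y y := by
  classical
  -- dictionary between the probabilistic Green function and matrix power series
  have hxy' : y ≠ x := Ne.symm hxy
  have hxB' : x ∈ B.erase y := Finset.mem_erase.mpr ⟨hxy, hx⟩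
  have hyB'' : y ∈ B.erase x := Finset.mem_erase.mpr ⟨hxy', hy⟩
  obtain ⟨N, hN1, hN2⟩ := exists_N hP0 μ hprob hlaw B hexit
  have hsum : ∀ a b : V, a ∈ B → b ∈ B → Summable (fun n => (Qm P B ^ n) a b) := by
    intro a b ha hb
    refine Summable.of_nonneg_of_le (fun n => pow_entry_nonneg (Qm_nonneg hP0 B) n a b)
      (fun n => ?_) (summable_sB hP0 hP1 hN2 ha)
    exact Finset.single_le_sum (f := fun c => (Qm P B ^ n) a c)
      (fun c _ => pow_entry_nonneg (Qm_nonneg hP0 B) n a c) hb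
  have e1 := tsum_decomp hP0 B x y x hx hy hx hxy hsum
  have e4 := tsum_decomp hP0 B x y y hx hy hy hxy hsum
  have e2 := tsum_decomp hP0 B y x x hy hx hx hxy' hsum
  have e3 := tsum_decomp hP0 B y x y hy hx hy hxy' hsum
  have z1 : ∑' n, (Qm P (B.erase y) ^ n) x y = 0 :=
    tsum_pow_zero_of_not_mem hxy (Finset.notMem_erase y B)
  have z2 : ∑' n, (Qm P (B.erase x) ^ n) y x = 0 :=
    tsum_pow_zero_of_not_mem hxy' (Finset.notMem_erase x B)
  rw [z1] at e4
  rw [z2] at e2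
  rw [green_eq_tsum hP0 μ hlaw (B.erase y) hxB' x,
    green_eq_tsum hP0 μ hlaw B hy y,
    green_eq_tsum hP0 μ hlaw B hx x,
    green_eq_tsum hP0 μ hlaw (B.erase x) hyB'' y]
  set gxx := ∑' n, (Qm P B ^ n) x x
  set gyy := ∑' n, (Qm P B ^ n) y y
  set gxy := ∑' n, (Qm P B ^ n) x y
  set gyx := ∑' n, (Qm P B ^ n) y x
  set g'xx := ∑' n, (Qm P (B.erase y) ^ n) x x
  set g''yy := ∑' n, (Qm P (B.erase x) ^ n) y y
  set p := ∑' k, (Qm P (B.erase y) ^ k * Qm P B) x y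
  set q := ∑' k, (Qm P (B.erase x) ^ k * Qm P B) y x
  -- e1 : gxx = g'xx + p * gyx ; e2 : gyx = 0 + q * gxx
  -- e3 : gyy = g''yy + q * gxy ; e4 : gxy = 0 + p * gyy
  linear_combination (-gyy) * e1 + (-(p * gyy)) * e2 + gxx * e3 + (q * gxx) * e4

end LERW
end

section
/- Let (Ω, X_n, ℙ_x) be a Markov chain on a nonempty finite set V, let B ⊆ V with B ≠ V satisfy ℙ_z(τ_{V∖B} < ∞) = 1 for every z ∈ B, and let y_0, y_1, …, y_n be distinct points of B. Define F_B(y_0, …, y_n) = G_B(y_0,y_0) · G_{B∖{y_0}}(y_1,y_1) · G_{B∖{y_0,y_1}}(y_2,y_2) ⋯ G_{B∖{y_0,…,y_{n-1}}}(y_n,y_n). Then for every permutation σ of {0,1,…,n}, F_B(y_0, y_1, …, y_n) = F_B(y_{σ(0)}, y_{σ(1)}, …, y_{σ(n)}). -/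
open MeasureTheory

namespace LERW

variable {V : Type*} [DecidableEq V]

variable [Fintype V]

variable [MeasurableSpace V]

namespace LERWAux

variable {V : Type*} [Fintype V] [DecidableEq V]
set_option linter.unusedSectionVars false

/-- The substochastic matrix of the chain killed outside `S`. -/
noncomputable def qmat (P : V → V → ℝ) (S : Finset V) : Matrix V V ℝ :=
  Matrix.of fun x y => if x ∈ S ∧ y ∈ S then P x y else 0

variable {P : V → V → ℝ}

lemma qmat_apply (S : Finset V) (x y : V) :
    qmat P S x y = if x ∈ S ∧ y ∈ S then P x y else 0 := rfl

lemma qmat_nonneg (hP0 : ∀ a b, 0 ≤ P a b) (S : Finset V) (x y : V) :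
    0 ≤ qmat P S x y := by
  rw [qmat_apply]; split <;> simp [hP0]

lemma qmat_pow_nonneg (hP0 : ∀ a b, 0 ≤ P a b) (S : Finset V) (n : ℕ) (x y : V) :
    0 ≤ (qmat P S ^ n) x y := by
  induction n generalizing x y with
  | zero => simp [Matrix.one_apply]; positivity
  | succ n ih =>
    rw [pow_succ, Matrix.mul_apply]
    exact Finset.sum_nonneg fun z _ => mul_nonneg (ih x z) (qmat_nonneg hP0 S z y)

lemma qmat_pow_zero_left (S : Finset V) {x : V} (hx : x ∉ S) (n : ℕ) (y : V) :
    (qmat P S ^ (n + 1)) x y = 0 := by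
  rw [pow_succ', Matrix.mul_apply]
  apply Finset.sum_eq_zero
  intro z _
  rw [qmat_apply, if_neg (fun h => hx h.1), zero_mul]

lemma qmat_pow_zero_right (S : Finset V) {y : V} (hy : y ∉ S) (n : ℕ) (x : V) :
    (qmat P S ^ (n + 1)) x y = 0 := by
  rw [pow_succ, Matrix.mul_apply]
  apply Finset.sum_eq_zero
  intro z _
  rw [qmat_apply, if_neg (fun h => hy h.2), mul_zero]

/-- row sums of powers of `qmat`. -/
noncomputable def rsum (P : V → V → ℝ) (S : Finset V) (n : ℕ) (x : V) : ℝ :=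
  ∑ y, (qmat P S ^ n) x y

lemma rsum_nonneg (hP0 : ∀ a b, 0 ≤ P a b) (S : Finset V) (n : ℕ) (x : V) :
    0 ≤ rsum P S n x :=
  Finset.sum_nonneg fun y _ => qmat_pow_nonneg hP0 S n x y

lemma rsum_one_le (hP0 : ∀ a b, 0 ≤ P a b) (hP1 : ∀ a, ∑ b, P a b = 1)
    (S : Finset V) (x : V) : rsum P S 1 x ≤ 1 := by
  unfold rsum
  simp only [pow_one]
  calc ∑ y, qmat P S x y ≤ ∑ y, P x y := by
        apply Finset.sum_le_sum
        intro y _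
        rw [qmat_apply]; split <;> simp [hP0]
    _ = 1 := hP1 x

lemma rsum_le_one (hP0 : ∀ a b, 0 ≤ P a b) (hP1 : ∀ a, ∑ b, P a b = 1)
    (S : Finset V) (n : ℕ) (x : V) : rsum P S n x ≤ 1 := by
  induction n generalizing x with
  | zero => unfold rsum; simp [Matrix.one_apply]
  | succ n ih =>
    unfold rsum
    have : ∀ y, (qmat P S ^ (n + 1)) x y = ∑ z, qmat P S x z * (qmat P S ^ n) z y := by
      intro y; rw [pow_succ', Matrix.mul_apply]
    simp only [this]
    rw [Finset.sum_comm]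
    calc ∑ z, ∑ y, qmat P S x z * (qmat P S ^ n) z y
        = ∑ z, qmat P S x z * rsum P S n z := by
          simp [rsum, Finset.mul_sum]
      _ ≤ ∑ z, qmat P S x z * 1 := by
          apply Finset.sum_le_sum
          intro z _
          exact mul_le_mul_of_nonneg_left (ih z) (qmat_nonneg hP0 S x z)
      _ ≤ 1 := by
          have := rsum_one_le hP0 hP1 S x
          unfold rsum at this
          simpa [pow_one] using this

lemma rsum_add (S : Finset V) (m n : ℕ) (x : V) :
    rsum P S (m + n) x = ∑ z, (qmat P S ^ m) x z * rsum P S n z := by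
  unfold rsum
  have : ∀ y, (qmat P S ^ (m + n)) x y = ∑ z, (qmat P S ^ m) x z * (qmat P S ^ n) z y := by
    intro y; rw [pow_add, Matrix.mul_apply]
  simp only [this]
  rw [Finset.sum_comm]
  simp [Finset.mul_sum]

lemma qmat_pow_le_rsum (hP0 : ∀ a b, 0 ≤ P a b) (S : Finset V) (n : ℕ) (x y : V) :
    (qmat P S ^ n) x y ≤ rsum P S n x :=
  Finset.single_le_sum (fun z _ => qmat_pow_nonneg hP0 S n x z) (Finset.mem_univ y)

lemma rsum_mono (hP0 : ∀ a b, 0 ≤ P a b) (hP1 : ∀ a, ∑ b, P a b = 1)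
    (S : Finset V) {m n : ℕ} (h : m ≤ n) (x : V) : rsum P S n x ≤ rsum P S m x := by
  obtain ⟨k, rfl⟩ := Nat.exists_eq_add_of_le h
  rw [rsum_add]
  calc ∑ z, (qmat P S ^ m) x z * rsum P S k z
      ≤ ∑ z, (qmat P S ^ m) x z * 1 := by
        apply Finset.sum_le_sum
        intro z _
        exact mul_le_mul_of_nonneg_left (rsum_le_one hP0 hP1 S k z) (qmat_pow_nonneg hP0 S m x z)
    _ = rsum P S m x := by simp [rsum]

end LERWAux

namespace LERWAux2
open LERWAux

variable {V : Type*} [Fintype V] [DecidableEq V]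
set_option linter.unusedSectionVars false

/-- sum over paths of length `n` staying in `S` from `x` to `y` of products of `P`-steps. -/
noncomputable def pathSum (P : V → V → ℝ) (S : Finset V) (n : ℕ) (x y : V) : ℝ :=
  ∑ c : Fin (n + 1) → V,
    if c 0 = x ∧ c (Fin.last n) = y ∧ ∀ i, c i ∈ S then
      ∏ i : Fin n, P (c i.castSucc) (c i.succ)
    else 0

variable {P : V → V → ℝ}

lemma pathSum_eq_zero_of_not_mem (S : Finset V) (n : ℕ) {z : V} (hz : z ∉ S) (x : V) :
    pathSum P S n x z = 0 := by
  unfold pathSum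
  apply Finset.sum_eq_zero
  intro c _
  rw [if_neg]
  rintro ⟨-, rfl, hall⟩
  exact hz (hall _)

lemma pathSum_succ (S : Finset V) (n : ℕ) (x y : V) :
    pathSum P S (n + 1) x y = ∑ z, pathSum P S n x z * qmat P S z y := by
  classical
  unfold pathSum
  rw [← Equiv.sum_comp (Fin.snocEquiv (fun _ => V))]
  rw [Fintype.sum_prod_type]
  have key : ∀ (v : V) (c : Fin (n + 1) → V),
      (if (Fin.snocEquiv (fun _ => V) (v, c)) 0 = x ∧
          (Fin.snocEquiv (fun _ => V) (v, c)) (Fin.last (n+1)) = y ∧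
          (∀ i, (Fin.snocEquiv (fun _ => V) (v, c)) i ∈ S) then
        ∏ i : Fin (n+1), P ((Fin.snocEquiv (fun _ => V) (v, c)) i.castSucc)
          ((Fin.snocEquiv (fun _ => V) (v, c)) i.succ)
      else 0)
      = (if v = y then
          (if c 0 = x ∧ (∀ i, c i ∈ S) then
            (∏ i : Fin n, P (c i.castSucc) (c i.succ)) * qmat P S (c (Fin.last n)) v
          else 0) else 0) := by
    intro v c
    have hsnoc : Fin.snocEquiv (fun _ => V) (v, c) = Fin.snoc c v := rfl
    rw [hsnoc]
    have h0 : (Fin.snoc c v : Fin (n+2) → V) 0 = c 0 := by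
      have : (0 : Fin (n + 2)) = Fin.castSucc 0 := rfl
      rw [this, Fin.snoc_castSucc]
    have hlast : (Fin.snoc c v : Fin (n+2) → V) (Fin.last (n+1)) = v := by simp
    have hall : (∀ i, (Fin.snoc c v : Fin (n+2) → V) i ∈ S) ↔ (v ∈ S ∧ ∀ i, c i ∈ S) := by
      constructor
      · intro h
        refine ⟨by simpa [hlast] using h (Fin.last (n+1)), fun i => by
          simpa [Fin.snoc_castSucc] using h i.castSucc⟩
      · rintro ⟨hv, hc⟩ i
        refine Fin.lastCases ?_ (fun j => ?_) i
        · simpa [hlast] using hv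
        · simpa [Fin.snoc_castSucc] using hc j
    have hprod : (∏ i : Fin (n+1), P ((Fin.snoc c v : Fin (n+2) → V) i.castSucc)
        ((Fin.snoc c v : Fin (n+2) → V) i.succ))
        = (∏ i : Fin n, P (c i.castSucc) (c i.succ)) * P (c (Fin.last n)) v := by
      rw [Fin.prod_univ_castSucc]
      congr 1
      · apply Finset.prod_congr rfl
        intro i _
        rw [Fin.snoc_castSucc, Fin.succ_castSucc, Fin.snoc_castSucc]
      · rw [Fin.succ_last, Fin.snoc_castSucc, Fin.snoc_last]
    by_cases hv : v = y
    · rw [if_pos hv]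
      by_cases hc : c 0 = x ∧ (∀ i, c i ∈ S)
      · rw [if_pos hc]
        by_cases hvS : v ∈ S
        · rw [if_pos ⟨by rw [h0]; exact hc.1, by rw [hlast]; exact hv,
            hall.2 ⟨hvS, hc.2⟩⟩, hprod, qmat_apply,
            if_pos ⟨hc.2 (Fin.last n), hvS⟩]
        · rw [if_neg, qmat_apply, if_neg (fun h => hvS h.2), mul_zero]
          rintro ⟨-, -, h3⟩
          exact hvS (hall.1 h3).1
      · rw [if_neg, if_neg hc]
        rintro ⟨h1, -, h3⟩
        exact hc ⟨by rwa [h0] at h1, (hall.1 h3).2⟩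
    · rw [if_neg, if_neg hv]
      rintro ⟨-, h2, -⟩
      exact hv (by rwa [hlast] at h2)
  simp only [key]
  rw [Finset.sum_eq_single_of_mem y (Finset.mem_univ y) (fun v _ hv => by
    apply Finset.sum_eq_zero; intro c _; rw [if_neg hv])]
  simp only [eq_self_iff_true, if_true]
  simp only [Finset.sum_mul]
  rw [Finset.sum_comm]
  apply Finset.sum_congr rfl
  intro c _
  have : ∀ z, (if c 0 = x ∧ c (Fin.last n) = z ∧ (∀ i, c i ∈ S) then
      ∏ i : Fin n, P (c i.castSucc) (c i.succ) else 0) * qmat P S z y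
      = if c (Fin.last n) = z then
          (if c 0 = x ∧ (∀ i, c i ∈ S) then
            (∏ i : Fin n, P (c i.castSucc) (c i.succ)) * qmat P S z y else 0)
        else 0 := by
    intro z
    by_cases hz : c (Fin.last n) = z
    · rw [if_pos hz]
      by_cases hc : c 0 = x ∧ (∀ i, c i ∈ S)
      · rw [if_pos ⟨hc.1, hz, hc.2⟩, if_pos hc]
      · rw [if_neg (fun h => hc ⟨h.1, h.2.2⟩), if_neg hc, zero_mul]
    · rw [if_neg (fun h => hz h.2.1), if_neg hz, zero_mul]
  simp only [this]
  rw [Finset.sum_ite_eq]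
  simp

lemma pathSum_eq_pow (hP1 : ∀ a, ∑ b, P a b = 1)
    (S : Finset V) (n : ℕ) (x y : V) (hx : x ∈ S) :
    pathSum P S n x y = (qmat P S ^ n) x y := by
  induction n generalizing y with
  | zero =>
    unfold pathSum
    rw [Fintype.sum_equiv (Equiv.funUnique (Fin 1) V)
      _ (fun v => if v = x ∧ v = y ∧ v ∈ S then 1 else 0) ?_]
    · rw [pow_zero, Matrix.one_apply]
      by_cases hxy : x = y
      · subst hxy
        rw [Finset.sum_eq_single_of_mem x (Finset.mem_univ x) (fun v _ hv =>
          if_neg (fun h => hv h.1)), if_pos ⟨rfl, rfl, hx⟩, if_pos rfl]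
      · rw [if_neg hxy]
        apply Finset.sum_eq_zero
        intro v _
        rw [if_neg]
        rintro ⟨rfl, rfl, -⟩
        exact hxy rfl
    · intro c
      have hc : ∀ i : Fin 1, c i = c 0 := fun i => by rw [Subsingleton.elim i 0]
      have he : (Equiv.funUnique (Fin 1) V) c = c 0 := rfl
      rw [he]
      by_cases h : c 0 = x ∧ c 0 = y ∧ c 0 ∈ S
      · rw [if_pos ⟨h.1, (hc (Fin.last 0)).trans h.2.1, fun i => by rw [hc i]; exact h.2.2⟩]
        show _ = if c 0 = x ∧ c 0 = y ∧ c 0 ∈ S then (1:ℝ) else 0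
        rw [if_pos h]
        simp
      · rw [if_neg (fun hh => h ⟨hh.1, (hc (Fin.last 0)).symm.trans hh.2.1, hh.2.2 0⟩)]
        show (0:ℝ) = if c 0 = x ∧ c 0 = y ∧ c 0 ∈ S then (1:ℝ) else 0
        rw [if_neg h]
  | succ n ih =>
    rw [pathSum_succ, pow_succ, Matrix.mul_apply]
    exact Finset.sum_congr rfl fun z _ => by rw [ih z]

end LERWAux2

section Meas
open MeasureTheory LERWAux LERWAux2
variable {V : Type*} [Fintype V] [DecidableEq V]
  [MeasurableSpace V] [MeasurableSingletonClass V]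
set_option linter.unusedSectionVars false
variable {P : V → V → ℝ} {μ : V → Measure (ℕ → V)}

lemma meas_event (hP0 : ∀ a b, 0 ≤ P a b) (hP1 : ∀ a, ∑ b, P a b = 1)
    (hlaw : ∀ (a : V) (n : ℕ) (y : ℕ → V),
      μ a {ω | ∀ i ≤ n, ω i = y i} =
        ENNReal.ofReal ((if a = y 0 then (1 : ℝ) else 0) *
          ∏ i ∈ Finset.Icc 1 n, P (y (i - 1)) (y i)))
    (S : Finset V) (n : ℕ) (x y : V) (hx : x ∈ S) :
    μ x {ω | ω n = y ∧ ∀ k ≤ n, ω k ∈ S} = ENNReal.ofReal ((qmat P S ^ n) x y) := by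
  classical
  set ext : (Fin (n+1) → V) → ℕ → V :=
    fun c i => if h : i < n + 1 then c ⟨i, h⟩ else c 0 with hext
  have hextlt : ∀ c (i : ℕ) (h : i < n+1), ext c i = c ⟨i, h⟩ := fun c i h => dif_pos h
  set C : Finset (Fin (n+1) → V) :=
    Finset.univ.filter (fun c => c (Fin.last n) = y ∧ ∀ i, c i ∈ S) with hC
  have hE : {ω : ℕ → V | ω n = y ∧ ∀ k ≤ n, ω k ∈ S}
      = ⋃ c ∈ C, {ω : ℕ → V | ∀ i ≤ n, ω i = ext c i} := by
    ext ω
    simp only [Set.mem_setOf_eq, Set.mem_iUnion, hC, Finset.mem_filter, Finset.mem_univ,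
      true_and, exists_prop]
    constructor
    · rintro ⟨hn, hS⟩
      refine ⟨fun i => ω (i : ℕ), ⟨hn, fun i => hS _ (Nat.lt_succ_iff.1 i.isLt)⟩, ?_⟩
      intro i hi
      rw [hextlt (fun j : Fin (n+1) => ω (j : ℕ)) i (Nat.lt_succ_of_le hi)]
    · rintro ⟨c, ⟨hcy, hcS⟩, hω⟩
      constructor
      · rw [hω n le_rfl, hextlt c n (Nat.lt_succ_self n)]
        exact hcy
      · intro k hk
        rw [hω k hk, hextlt c k (Nat.lt_succ_of_le hk)]
        exact hcS _
  have hmeas : ∀ c : Fin (n+1) → V,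
      MeasurableSet {ω : ℕ → V | ∀ i ≤ n, ω i = ext c i} := by
    intro c
    have : {ω : ℕ → V | ∀ i ≤ n, ω i = ext c i}
        = ⋂ i, ⋂ (_ : i ≤ n), (fun ω : ℕ → V => ω i) ⁻¹' {ext c i} := by
      ext ω; simp [Set.mem_iInter]
    rw [this]
    exact MeasurableSet.iInter fun i => MeasurableSet.iInter fun _ =>
      (measurable_pi_apply i) (measurableSet_singleton _)
  have hdisj : (↑C : Set (Fin (n+1) → V)).PairwiseDisjoint
      (fun c => {ω : ℕ → V | ∀ i ≤ n, ω i = ext c i}) := by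
    intro c _ c' _ hne
    refine Set.disjoint_left.2 fun ω hω hω' => hne (funext fun i => ?_)
    have h1 := hω (i : ℕ) (Nat.lt_succ_iff.1 i.isLt)
    have h2 := hω' (i : ℕ) (Nat.lt_succ_iff.1 i.isLt)
    rw [hextlt c _ i.isLt] at h1
    rw [hextlt c' _ i.isLt] at h2
    rw [← Fin.eta i i.isLt] at *
    rw [← h1, ← h2]
  rw [hE, measure_biUnion_finset hdisj (fun c _ => hmeas c)]
  have hval : ∀ c ∈ C, μ x {ω : ℕ → V | ∀ i ≤ n, ω i = ext c i}
      = ENNReal.ofReal ((if x = ext c 0 then (1:ℝ) else 0) *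
          ∏ i ∈ Finset.Icc 1 n, P (ext c (i - 1)) (ext c i)) := fun c _ => hlaw x n (ext c)
  rw [Finset.sum_congr rfl hval, ← ENNReal.ofReal_sum_of_nonneg (fun c _ => by
    apply mul_nonneg
    · split <;> norm_num
    · exact Finset.prod_nonneg fun i _ => hP0 _ _)]
  congr 1
  have hprod : ∀ c : Fin (n+1) → V,
      (∏ i ∈ Finset.Icc 1 n, P (ext c (i-1)) (ext c i))
        = ∏ i : Fin n, P (c i.castSucc) (c i.succ) := by
    intro c
    rw [← Finset.Ico_add_one_right_eq_Icc, Finset.prod_Ico_eq_prod_range]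
    have hn : n + 1 - 1 = n := rfl
    rw [hn, ← Fin.prod_univ_eq_prod_range (fun k => P (ext c (1+k-1)) (ext c (1+k))) n]
    apply Finset.prod_congr rfl
    intro i _
    have h1 : (1 : ℕ) + (i : ℕ) - 1 = (i : ℕ) := by omega
    have h2 : (1 : ℕ) + (i : ℕ) = (i : ℕ) + 1 := by omega
    rw [h1, h2, hextlt c (i : ℕ) (by omega), hextlt c ((i : ℕ) + 1) (by omega)]
    congr 1
  have h0 : ∀ c : Fin (n+1) → V, ext c 0 = c 0 := fun c => hextlt c 0 (by omega)
  rw [← pathSum_eq_pow (P := P) hP1 S n x y hx]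
  unfold pathSum
  rw [hC, Finset.sum_filter]
  apply Finset.sum_congr rfl
  intro c _
  rw [hprod c, h0 c]
  by_cases hc : c (Fin.last n) = y ∧ ∀ i, c i ∈ S
  · rw [if_pos hc]
    by_cases hcx : c 0 = x
    · rw [if_pos (hcx.symm), one_mul, if_pos ⟨hcx, hc.1, hc.2⟩]
    · rw [if_neg (fun h => hcx h.symm), zero_mul, if_neg (fun h => hcx h.1)]
  · rw [if_neg hc, if_neg (fun h => hc ⟨h.2.1, h.2.2⟩)]

lemma meas_stay (hP0 : ∀ a b, 0 ≤ P a b) (hP1 : ∀ a, ∑ b, P a b = 1)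
    (hlaw : ∀ (a : V) (n : ℕ) (y : ℕ → V),
      μ a {ω | ∀ i ≤ n, ω i = y i} =
        ENNReal.ofReal ((if a = y 0 then (1 : ℝ) else 0) *
          ∏ i ∈ Finset.Icc 1 n, P (y (i - 1)) (y i)))
    (S : Finset V) (n : ℕ) (x : V) (hx : x ∈ S) :
    μ x {ω | ∀ k ≤ n, ω k ∈ S} = ENNReal.ofReal (rsum P S n x) := by
  classical
  have hE : {ω : ℕ → V | ∀ k ≤ n, ω k ∈ S}
      = ⋃ y ∈ (Finset.univ : Finset V), {ω : ℕ → V | ω n = y ∧ ∀ k ≤ n, ω k ∈ S} := by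
    ext ω
    simp only [Set.mem_setOf_eq, Set.mem_iUnion, Finset.mem_univ, exists_prop, true_and]
    exact ⟨fun h => ⟨ω n, rfl, h⟩, fun ⟨y, _, h⟩ => h⟩
  have hmE : ∀ y : V, MeasurableSet {ω : ℕ → V | ω n = y ∧ ∀ k ≤ n, ω k ∈ S} := by
    intro y
    have : {ω : ℕ → V | ω n = y ∧ ∀ k ≤ n, ω k ∈ S}
        = ((fun ω : ℕ → V => ω n) ⁻¹' {y}) ∩
          ⋂ k, ⋂ (_ : k ≤ n), (fun ω : ℕ → V => ω k) ⁻¹' ↑S := by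
      ext ω; simp [Set.mem_iInter]
    rw [this]
    exact ((measurable_pi_apply n) (measurableSet_singleton _)).inter
      (MeasurableSet.iInter fun k => MeasurableSet.iInter fun _ =>
        (measurable_pi_apply k) S.measurableSet)
  have hdisj : (↑(Finset.univ : Finset V) : Set V).PairwiseDisjoint
      (fun y => {ω : ℕ → V | ω n = y ∧ ∀ k ≤ n, ω k ∈ S}) := by
    intro a _ b _ hab
    exact Set.disjoint_left.2 fun ω h1 h2 => hab (h1.1 ▸ h2.1 ▸ rfl)
  rw [hE, measure_biUnion_finset hdisj (fun y _ => hmE y)]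
  rw [Finset.sum_congr rfl (fun y _ => meas_event hP0 hP1 hlaw S n x y hx)]
  rw [← ENNReal.ofReal_sum_of_nonneg (fun y _ => qmat_pow_nonneg hP0 S n x y)]
  rfl

lemma measurable_stay (S : Finset V) (n : ℕ) :
    MeasurableSet {ω : ℕ → V | ∀ k ≤ n, ω k ∈ S} := by
  have : {ω : ℕ → V | ∀ k ≤ n, ω k ∈ S}
      = ⋂ k, ⋂ (_ : k ≤ n), (fun ω : ℕ → V => ω k) ⁻¹' ↑S := by
    ext ω; simp [Set.mem_iInter]
  rw [this]
  exact MeasurableSet.iInter fun k => MeasurableSet.iInter fun _ =>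
    (measurable_pi_apply k) S.measurableSet

lemma tendsto_rsum (hP0 : ∀ a b, 0 ≤ P a b) (hP1 : ∀ a, ∑ b, P a b = 1)
    (hlaw : ∀ (a : V) (n : ℕ) (y : ℕ → V),
      μ a {ω | ∀ i ≤ n, ω i = y i} =
        ENNReal.ofReal ((if a = y 0 then (1 : ℝ) else 0) *
          ∏ i ∈ Finset.Icc 1 n, P (y (i - 1)) (y i)))
    (hprob : ∀ a : V, IsProbabilityMeasure (μ a))
    (B : Finset V)
    (hexit : ∀ z ∈ B, μ z {ω | ∃ n : ℕ, ω n ∉ B} = 1)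
    (S : Finset V) (hSB : S ⊆ B) (x : V) (hx : x ∈ S) :
    Filter.Tendsto (fun n => rsum P S n x) Filter.atTop (nhds 0) := by
  classical
  haveI := hprob x
  set A : ℕ → Set (ℕ → V) := fun n => {ω : ℕ → V | ∀ k ≤ n, ω k ∈ S} with hA
  have hmono : Antitone A := fun m n hmn ω hω k hk => hω k (hk.trans hmn)
  have hBset : MeasurableSet {ω : ℕ → V | ∃ n : ℕ, ω n ∉ B} := by
    have : {ω : ℕ → V | ∃ n : ℕ, ω n ∉ B}
        = ⋃ n, (fun ω : ℕ → V => ω n) ⁻¹' (↑B : Set V)ᶜ := by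
      ext ω; simp [Set.mem_iUnion]
    rw [this]
    exact MeasurableSet.iUnion fun n => (measurable_pi_apply n) B.measurableSet.compl
  have h0 : μ x (⋂ n, A n) = 0 := by
    have hsub : (⋂ n, A n) ⊆ {ω : ℕ → V | ∃ n : ℕ, ω n ∉ B}ᶜ := by
      intro ω hω
      simp only [Set.mem_compl_iff, Set.mem_setOf_eq, not_exists, not_not]
      intro n
      exact hSB ((Set.mem_iInter.1 hω n) n le_rfl)
    refine le_antisymm (le_trans (measure_mono hsub) ?_) zero_le
    have := hprob x
    rw [measure_compl hBset (measure_ne_top _ _), hexit x (hSB hx), measure_univ]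
    simp
  have htend : Filter.Tendsto (fun n => μ x (A n)) Filter.atTop (nhds 0) := by
    have := MeasureTheory.tendsto_measure_iInter_atTop
      (fun n => (measurable_stay S n).nullMeasurableSet) hmono ⟨0, measure_ne_top (μ x) _⟩
    rw [h0] at this
    exact this
  have hre : ∀ n, rsum P S n x = (μ x (A n)).toReal := by
    intro n
    rw [hA]
    rw [meas_stay hP0 hP1 hlaw S n x hx, ENNReal.toReal_ofReal (rsum_nonneg hP0 S n x)]
  simp only [hre]
  have : Filter.Tendsto ENNReal.toReal (nhds 0) (nhds 0) := by
    simpa using ENNReal.tendsto_toReal (a := 0) (by simp)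
  exact this.comp htend

lemma exists_half (hP0 : ∀ a b, 0 ≤ P a b) (hP1 : ∀ a, ∑ b, P a b = 1)
    (hlaw : ∀ (a : V) (n : ℕ) (y : ℕ → V),
      μ a {ω | ∀ i ≤ n, ω i = y i} =
        ENNReal.ofReal ((if a = y 0 then (1 : ℝ) else 0) *
          ∏ i ∈ Finset.Icc 1 n, P (y (i - 1)) (y i)))
    (hprob : ∀ a : V, IsProbabilityMeasure (μ a))
    (B : Finset V)
    (hexit : ∀ z ∈ B, μ z {ω | ∃ n : ℕ, ω n ∉ B} = 1)
    (S : Finset V) (hSB : S ⊆ B) :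
    ∃ N : ℕ, 0 < N ∧ ∀ x, rsum P S N x ≤ 1 / 2 := by
  classical
  have hev : ∀ᶠ n in Filter.atTop, ∀ x : V, rsum P S n x ≤ 1 / 2 := by
    rw [Filter.eventually_all]
    intro x
    by_cases hx : x ∈ S
    · exact (tendsto_rsum hP0 hP1 hlaw hprob B hexit S hSB x hx).eventually_le_const
        (by norm_num)
    · refine Filter.eventually_atTop.2 ⟨1, fun n hn => ?_⟩
      obtain ⟨m, rfl⟩ := Nat.exists_eq_add_of_le hn
      have : rsum P S (1 + m) x = 0 := by
        unfold rsum
        rw [Nat.add_comm]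
        exact Finset.sum_eq_zero fun y _ => qmat_pow_zero_left S hx m y
      rw [this]; norm_num
  obtain ⟨N, hN⟩ := (hev.and (Filter.eventually_ge_atTop 1)).exists
  exact ⟨N, hN.2, hN.1⟩

end Meas

namespace LERWAux
variable {V : Type*} [Fintype V] [DecidableEq V]
set_option linter.unusedSectionVars false
variable {P : V → V → ℝ}

lemma rsum_step (hP0 : ∀ a b, 0 ≤ P a b) {S : Finset V} {N : ℕ}
    (hN : ∀ z, rsum P S N z ≤ 1 / 2) (m : ℕ) (x : V) :
    rsum P S (m + N) x ≤ (1 / 2) * rsum P S m x := by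
  rw [rsum_add]
  calc ∑ z, (qmat P S ^ m) x z * rsum P S N z
      ≤ ∑ z, (qmat P S ^ m) x z * (1 / 2) := by
        apply Finset.sum_le_sum
        intro z _
        exact mul_le_mul_of_nonneg_left (hN z) (qmat_pow_nonneg hP0 S m x z)
    _ = (1 / 2) * rsum P S m x := by rw [rsum, Finset.mul_sum]; exact Finset.sum_congr rfl fun z _ => mul_comm _ _

lemma rsum_pow_le (hP0 : ∀ a b, 0 ≤ P a b) (hP1 : ∀ a, ∑ b, P a b = 1)
    {S : Finset V} {N : ℕ} (hN : ∀ z, rsum P S N z ≤ 1 / 2) (k : ℕ) (x : V) :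
    rsum P S (k * N) x ≤ (1 / 2) ^ k := by
  induction k with
  | zero => simpa using rsum_le_one hP0 hP1 S 0 x
  | succ k ih =>
    have : (k + 1) * N = k * N + N := by ring
    rw [this]
    calc rsum P S (k * N + N) x ≤ (1 / 2) * rsum P S (k * N) x := rsum_step hP0 hN _ x
      _ ≤ (1 / 2) * (1 / 2) ^ k := by linarith [ih]
      _ = (1 / 2) ^ (k + 1) := by ring

lemma sum_range_rsum_le (hP0 : ∀ a b, 0 ≤ P a b) (hP1 : ∀ a, ∑ b, P a b = 1)
    {S : Finset V} {N : ℕ} (hN : ∀ z, rsum P S N z ≤ 1 / 2) (K : ℕ) (x : V) :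
    ∑ i ∈ Finset.range (K * N), rsum P S i x ≤ 2 * N - 2 * N * (1 / 2) ^ K := by
  induction K with
  | zero => simp
  | succ K ih =>
    have hKN : (K + 1) * N = K * N + N := by ring
    rw [hKN, Finset.sum_range_add]
    have hblock : ∑ i ∈ Finset.range N, rsum P S (K * N + i) x ≤ N * (1 / 2) ^ K := by
      calc ∑ i ∈ Finset.range N, rsum P S (K * N + i) x
          ≤ ∑ _i ∈ Finset.range N, (1 / 2 : ℝ) ^ K := by
            apply Finset.sum_le_sum
            intro i _
            exact le_trans (rsum_mono hP0 hP1 S (Nat.le_add_right _ _) x)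
              (rsum_pow_le hP0 hP1 hN K x)
        _ = N * (1 / 2) ^ K := by rw [Finset.sum_const, Finset.card_range, nsmul_eq_mul]
    have h2 : (2 : ℝ) * N - 2 * N * (1 / 2) ^ K + N * (1 / 2) ^ K
        = 2 * N - 2 * N * (1 / 2) ^ (K + 1) := by ring
    linarith [ih, hblock]

lemma summable_rsum (hP0 : ∀ a b, 0 ≤ P a b) (hP1 : ∀ a, ∑ b, P a b = 1)
    {S : Finset V} {N : ℕ} (hNpos : 0 < N) (hN : ∀ z, rsum P S N z ≤ 1 / 2) (x : V) :
    Summable (fun n => rsum P S n x) := by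
  apply summable_of_sum_range_le (c := 2 * N) (fun n => rsum_nonneg hP0 S n x)
  intro n
  calc ∑ i ∈ Finset.range n, rsum P S i x
      ≤ ∑ i ∈ Finset.range (n * N), rsum P S i x := by
        apply Finset.sum_le_sum_of_subset_of_nonneg
        · exact Finset.range_subset_range.2 (Nat.le_mul_of_pos_right n hNpos)
        · intro i _ _; exact rsum_nonneg hP0 S i x
    _ ≤ 2 * N - 2 * N * (1 / 2) ^ n := sum_range_rsum_le hP0 hP1 hN n x
    _ ≤ 2 * N := by
        have : (0:ℝ) ≤ 2 * N * (1 / 2) ^ n := by positivity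
        linarith

lemma summable_qpow' (hP0 : ∀ a b, 0 ≤ P a b) (hP1 : ∀ a, ∑ b, P a b = 1)
    {S : Finset V} {N : ℕ} (hNpos : 0 < N) (hN : ∀ z, rsum P S N z ≤ 1 / 2) (x y : V) :
    Summable (fun n => (qmat P S ^ n) x y) :=
  Summable.of_nonneg_of_le (fun n => qmat_pow_nonneg hP0 S n x y)
    (fun n => qmat_pow_le_rsum hP0 S n x y) (summable_rsum hP0 hP1 hNpos hN x)

end LERWAux

namespace LERWAux
variable {V : Type*} [Fintype V] [DecidableEq V]
set_option linter.unusedSectionVars false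
variable {P : V → V → ℝ}

/-- Green matrix: `∑ₙ Qⁿ`. -/
noncomputable def gmat (P : V → V → ℝ) (S : Finset V) : Matrix V V ℝ :=
  Matrix.of fun x y => ∑' n, (qmat P S ^ n) x y

lemma gmat_apply (S : Finset V) (x y : V) :
    gmat P S x y = ∑' n, (qmat P S ^ n) x y := rfl

lemma gmat_right_inv (S : Finset V)
    (hsum : ∀ x y, Summable (fun n => (qmat P S ^ n) x y)) :
    (1 - qmat P S) * gmat P S = 1 := by
  have hQG : ∀ x y, (qmat P S * gmat P S) x y = gmat P S x y - (1 : Matrix V V ℝ) x y := by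
    intro x y
    rw [Matrix.mul_apply]
    calc ∑ z, qmat P S x z * gmat P S z y
        = ∑ z, ∑' n, qmat P S x z * (qmat P S ^ n) z y := by
          exact Finset.sum_congr rfl fun z _ => (tsum_mul_left).symm
      _ = ∑' n, ∑ z, qmat P S x z * (qmat P S ^ n) z y := by
          rw [Summable.tsum_finsetSum (fun z _ => (hsum z y).mul_left _)]
      _ = ∑' n, (qmat P S ^ (n + 1)) x y := by
          apply tsum_congr
          intro n
          rw [pow_succ', Matrix.mul_apply]
      _ = gmat P S x y - (1 : Matrix V V ℝ) x y := by
          have h := Summable.tsum_eq_zero_add (hsum x y)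
          rw [gmat_apply]
          have h0 : (qmat P S ^ 0) x y = (1 : Matrix V V ℝ) x y := by rw [pow_zero]
          rw [h, h0]
          ring
  ext x y
  rw [Matrix.sub_mul, Matrix.one_mul, Matrix.sub_apply, hQG]
  ring

lemma gmat_left_inv (S : Finset V)
    (hsum : ∀ x y, Summable (fun n => (qmat P S ^ n) x y)) :
    gmat P S * (1 - qmat P S) = 1 := by
  have hGQ : ∀ x y, (gmat P S * qmat P S) x y = gmat P S x y - (1 : Matrix V V ℝ) x y := by
    intro x y
    rw [Matrix.mul_apply]
    calc ∑ z, gmat P S x z * qmat P S z y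
        = ∑ z, ∑' n, (qmat P S ^ n) x z * qmat P S z y := by
          exact Finset.sum_congr rfl fun z _ => (tsum_mul_right).symm
      _ = ∑' n, ∑ z, (qmat P S ^ n) x z * qmat P S z y := by
          rw [Summable.tsum_finsetSum (fun z _ => (hsum x z).mul_right _)]
      _ = ∑' n, (qmat P S ^ (n + 1)) x y := by
          apply tsum_congr
          intro n
          rw [pow_succ, Matrix.mul_apply]
      _ = gmat P S x y - (1 : Matrix V V ℝ) x y := by
          have h := Summable.tsum_eq_zero_add (hsum x y)
          rw [gmat_apply]
          have h0 : (qmat P S ^ 0) x y = (1 : Matrix V V ℝ) x y := by rw [pow_zero]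
          rw [h, h0]
          ring
  ext x y
  rw [Matrix.mul_sub, Matrix.mul_one, Matrix.sub_apply, hGQ]
  ring

lemma det_ne_zero (S : Finset V)
    (hsum : ∀ x y, Summable (fun n => (qmat P S ^ n) x y)) :
    (1 - qmat P S).det ≠ 0 :=
  (Matrix.isUnit_det_of_right_inverse (gmat_right_inv S hsum)).ne_zero

/-- Two matrices whose `x`-row is `eₓ` and which agree outside row and column `x`
have equal determinants. -/
lemma det_eq_of_row_eq_single {M M' : Matrix V V ℝ} {x : V}
    (hrow : ∀ w, M x w = if w = x then 1 else 0)
    (hrow' : ∀ w, M' x w = if w = x then 1 else 0)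
    (hoff : ∀ z w, z ≠ x → w ≠ x → M z w = M' z w) : M.det = M'.det := by
  classical
  have key : ∀ (A : Matrix V V ℝ), (∀ w, A x w = if w = x then 1 else 0) →
      A.det = ((A.submatrix (Equiv.sumCompl (· = x)) (Equiv.sumCompl (· = x))).toBlocks₂₂).det := by
    intro A hA
    rw [← Matrix.det_submatrix_equiv_self (Equiv.sumCompl (· = x)) A]
    set B := A.submatrix (Equiv.sumCompl (· = x)) (Equiv.sumCompl (· = x)) with hB
    have h12 : B.toBlocks₁₂ = 0 := by
      ext i j
      have hi : (i : V) = x := i.prop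
      have hj : (j : V) ≠ x := j.prop
      show A (i : V) (j : V) = 0
      rw [hi, hA, if_neg hj]
    have h11 : B.toBlocks₁₁ = 1 := by
      ext i j
      have hij : i = j := Subtype.ext (i.prop.trans j.prop.symm)
      subst hij
      have hi : (i : V) = x := i.prop
      show A (i : V) (i : V) = (1 : Matrix _ _ ℝ) i i
      rw [hi, hA, if_pos rfl, Matrix.one_apply_eq]
    conv_lhs => rw [← Matrix.fromBlocks_toBlocks B, h11, h12]
    rw [Matrix.det_fromBlocks_zero₁₂, Matrix.det_one, one_mul]
  rw [key M hrow, key M' hrow']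
  congr 1
  ext i j
  exact hoff (i : V) (j : V) i.prop j.prop

lemma det_step (S : Finset V) {x : V} (hx : x ∈ S)
    (hsum : ∀ x y, Summable (fun n => (qmat P S ^ n) x y)) :
    (1 - qmat P S).det * gmat P S x x = (1 - qmat P (S.erase x)).det := by
  classical
  have hinv : (1 - qmat P S)⁻¹ = gmat P S := Matrix.inv_eq_right_inv (gmat_right_inv S hsum)
  have hdet : (1 - qmat P S).det ≠ 0 := det_ne_zero S hsum
  have hg : gmat P S x x = ((1 - qmat P S).det)⁻¹ * (1 - qmat P S).adjugate x x := by
    rw [← hinv, Matrix.inv_def, Matrix.smul_apply, Ring.inverse_eq_inv, smul_eq_mul]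
  rw [hg, ← mul_assoc, mul_inv_cancel₀ hdet, one_mul, Matrix.adjugate_apply]
  apply det_eq_of_row_eq_single (x := x)
  · intro w
    rw [Matrix.updateRow_self]
    rw [Pi.single_apply]
  · intro w
    rw [Matrix.sub_apply, qmat_apply,
      if_neg (fun h : x ∈ S.erase x ∧ w ∈ S.erase x => (Finset.notMem_erase x S) h.1),
      sub_zero, Matrix.one_apply]
    by_cases h : w = x
    · rw [if_pos h.symm, if_pos h]
    · rw [if_neg (fun hh => h hh.symm), if_neg h]
  · intro z w hz hw
    rw [Matrix.updateRow_ne (fun h => hz h)]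
    rw [Matrix.sub_apply, Matrix.sub_apply, qmat_apply, qmat_apply]
    congr 1
    by_cases hzw : z ∈ S ∧ w ∈ S
    · rw [if_pos hzw, if_pos ⟨Finset.mem_erase.2 ⟨hz, hzw.1⟩, Finset.mem_erase.2 ⟨hw, hzw.2⟩⟩]
    · rw [if_neg hzw, if_neg (fun h => hzw ⟨Finset.mem_of_mem_erase h.1,
        Finset.mem_of_mem_erase h.2⟩)]

end LERWAux

section Final
set_option maxHeartbeats 1000000
open MeasureTheory LERWAux
variable {V : Type*} [Fintype V] [DecidableEq V]
  [MeasurableSpace V] [MeasurableSingletonClass V]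
set_option linter.unusedSectionVars false
variable {P : V → V → ℝ} {μ : V → Measure (ℕ → V)}

lemma green_eq_ratio (hP0 : ∀ a b : V, 0 ≤ P a b) (hP1 : ∀ a : V, ∑ b : V, P a b = 1)
    (hprob : ∀ a : V, IsProbabilityMeasure (μ a))
    (hlaw : ∀ (a : V) (n : ℕ) (y : ℕ → V),
      μ a {ω | ∀ i ≤ n, ω i = y i} =
        ENNReal.ofReal ((if a = y 0 then (1 : ℝ) else 0) *
          ∏ i ∈ Finset.Icc 1 n, P (y (i - 1)) (y i)))
    (B : Finset V)
    (hexit : ∀ z ∈ B, μ z {ω | ∃ n : ℕ, ω n ∉ B} = 1)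
    (S : Finset V) (hSB : S ⊆ B) (x : V) (hx : x ∈ S) :
    green μ S x x = (1 - qmat P (S.erase x)).det / (1 - qmat P S).det := by
  obtain ⟨N, hNpos, hN⟩ := exists_half hP0 hP1 hlaw hprob B hexit S hSB
  have hsum : ∀ a b, Summable (fun n => (qmat P S ^ n) a b) :=
    fun a b => summable_qpow' hP0 hP1 hNpos hN a b
  have h1 : green μ S x x = gmat P S x x := by
    rw [green, gmat_apply]
    apply tsum_congr
    intro n
    rw [meas_event hP0 hP1 hlaw S n x x hx,
      ENNReal.toReal_ofReal (qmat_pow_nonneg hP0 S n x x)]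
  rw [h1, eq_div_iff (det_ne_zero S hsum), mul_comm]
  exact det_step S hx hsum

lemma prod_green_telescope (hP0 : ∀ a b : V, 0 ≤ P a b) (hP1 : ∀ a : V, ∑ b : V, P a b = 1)
    (hprob : ∀ a : V, IsProbabilityMeasure (μ a))
    (hlaw : ∀ (a : V) (n : ℕ) (y : ℕ → V),
      μ a {ω | ∀ i ≤ n, ω i = y i} =
        ENNReal.ofReal ((if a = y 0 then (1 : ℝ) else 0) *
          ∏ i ∈ Finset.Icc 1 n, P (y (i - 1)) (y i)))
    (B : Finset V)
    (hexit : ∀ z ∈ B, μ z {ω | ∃ n : ℕ, ω n ∉ B} = 1)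
    (n : ℕ) (y : Fin (n + 1) → V) (hyinj : Function.Injective y)
    (hyB : ∀ i, y i ∈ B) :
    ∏ i : Fin (n + 1), green μ (B \ (Finset.Iio i).image y) (y i) (y i) =
      (1 - qmat P (B \ Finset.univ.image y)).det / (1 - qmat P B).det := by
  classical
  set T : ℕ → Finset V :=
    fun k => B \ (Finset.univ.filter (fun j : Fin (n+1) => (j : ℕ) < k)).image y with hT
  set d : Finset V → ℝ := fun S => (1 - qmat P S).det with hd
  have hTsub : ∀ k, T k ⊆ B := fun k => Finset.sdiff_subset
  have hdne : ∀ S : Finset V, S ⊆ B → d S ≠ 0 := by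
    intro S hSB
    obtain ⟨N, hNpos, hN⟩ := exists_half hP0 hP1 hlaw hprob B hexit S hSB
    exact det_ne_zero S (fun a b => summable_qpow' hP0 hP1 hNpos hN a b)
  have hT0 : T 0 = B := by
    rw [hT]
    show B \ Finset.image y (Finset.filter (fun j : Fin (n+1) => (j : ℕ) < 0) Finset.univ) = B
    rw [Finset.filter_false_of_mem (fun j _ => Nat.not_lt_zero _), Finset.image_empty,
      Finset.sdiff_empty]
  have hTtop : T (n+1) = B \ Finset.univ.image y := by
    rw [hT]
    show B \ Finset.image y (Finset.filter (fun j : Fin (n+1) => (j : ℕ) < n + 1) Finset.univ)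
      = B \ Finset.univ.image y
    rw [Finset.filter_true_of_mem (fun j _ => j.isLt)]
  have hIio : ∀ i : Fin (n+1), B \ (Finset.Iio i).image y = T (i : ℕ) := by
    intro i
    rw [hT]
    show _ = B \ Finset.image y (Finset.filter (fun j : Fin (n+1) => (j : ℕ) < (i : ℕ)) Finset.univ)
    congr 1
    congr 1
    ext j
    rw [Finset.mem_Iio, Finset.mem_filter]
    exact ⟨fun h => ⟨Finset.mem_univ j, h⟩, fun h => h.2⟩
  have hmem : ∀ i : Fin (n+1), y i ∈ T (i : ℕ) := by
    intro i
    rw [hT, Finset.mem_sdiff]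
    refine ⟨hyB i, fun hctr => ?_⟩
    obtain ⟨j, hj, hji⟩ := Finset.mem_image.1 hctr
    have : j = i := hyinj hji
    subst this
    exact lt_irrefl _ (Finset.mem_filter.1 hj).2
  have herase : ∀ i : Fin (n+1), (T (i : ℕ)).erase (y i) = T ((i : ℕ) + 1) := by
    intro i
    ext z
    rw [Finset.mem_erase, hT]
    simp only [Finset.mem_sdiff, Finset.mem_image, Finset.mem_filter, Finset.mem_univ, true_and,
      not_exists, not_and]
    constructor
    · rintro ⟨hz, hzB, hni⟩
      refine ⟨hzB, fun j hj => ?_⟩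
      rcases Nat.lt_succ_iff_lt_or_eq.1 hj with h | h
      · exact hni j h
      · have : j = i := Fin.ext h
        subst this
        exact fun hc => hz hc.symm
    · rintro ⟨hzB, hni⟩
      refine ⟨fun hc => hni i (Nat.lt_succ_self _) hc.symm, hzB, fun j hj => hni j (by omega)⟩
  have hfac : ∀ i : Fin (n+1),
      green μ (T (i : ℕ)) (y i) (y i) = d (T ((i : ℕ) + 1)) / d (T (i : ℕ)) := by
    intro i
    rw [← herase i, hd]
    exact green_eq_ratio hP0 hP1 hprob hlaw B hexit (T (i : ℕ)) (hTsub _) (y i) (hmem i)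
  calc ∏ i : Fin (n+1), green μ (B \ (Finset.Iio i).image y) (y i) (y i)
      = ∏ i : Fin (n+1), (fun k => d (T (k + 1)) / d (T k)) ((i : ℕ)) := by
        apply Finset.prod_congr rfl
        intro i _
        rw [hIio i, hfac i]
    _ = ∏ k ∈ Finset.range (n+1), (d (T (k + 1)) / d (T k)) :=
        Fin.prod_univ_eq_prod_range (fun k => d (T (k + 1)) / d (T k)) (n+1)
    _ = d (T (n+1)) / d (T 0) := by
        have : ∀ m, ∏ k ∈ Finset.range m, (d (T (k + 1)) / d (T k)) = d (T m) / d (T 0) := by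
          intro m
          induction m with
          | zero => rw [Finset.range_zero, Finset.prod_empty, div_self (hdne _ (hTsub 0))]
          | succ m ih =>
            rw [Finset.prod_range_succ, ih, div_mul_div_comm,
              mul_comm (d (T 0)) (d (T m)), mul_div_mul_left _ _ (hdne _ (hTsub m))]
        exact this (n+1)
    _ = (1 - qmat P (B \ Finset.univ.image y)).det / (1 - qmat P B).det := by
        rw [hTtop, hT0]

end Final

theorem green_F_permutation_invariant
    {V : Type*} [Fintype V] [DecidableEq V] [Nonempty V]
    [MeasurableSpace V] [MeasurableSingletonClass V]
    (P : V → V → ℝ) (μ : V → Measure (ℕ → V))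
    (hP0 : ∀ a b : V, 0 ≤ P a b) (hP1 : ∀ a : V, ∑ b : V, P a b = 1)
    (hprob : ∀ a : V, IsProbabilityMeasure (μ a))
    (hlaw : ∀ (a : V) (n : ℕ) (y : ℕ → V),
      μ a {ω | ∀ i ≤ n, ω i = y i} =
        ENNReal.ofReal ((if a = y 0 then (1 : ℝ) else 0) *
          ∏ i ∈ Finset.Icc 1 n, P (y (i - 1)) (y i)))
    (B : Finset V) (hB : B ≠ Finset.univ)
    (hexit : ∀ z ∈ B, μ z {ω | ∃ n : ℕ, ω n ∉ B} = 1)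
    (n : ℕ) (y : Fin (n + 1) → V) (hyinj : Function.Injective y)
    (hyB : ∀ i, y i ∈ B) (σ : Equiv.Perm (Fin (n + 1))) :
    ∏ i : Fin (n + 1), green μ (B \ (Finset.Iio i).image y) (y i) (y i) =
      ∏ i : Fin (n + 1),
        green μ (B \ (Finset.Iio i).image (y ∘ σ)) ((y ∘ σ) i) ((y ∘ σ) i) := by
  have h1 := prod_green_telescope (P := P) hP0 hP1 hprob hlaw B hexit n y hyinj hyB
  have h2 := prod_green_telescope (P := P) hP0 hP1 hprob hlaw B hexit n (y ∘ σ)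
    (hyinj.comp σ.injective) (fun i => hyB (σ i))
  have himg : Finset.univ.image (y ∘ σ) = Finset.univ.image y := by
    ext z
    simp only [Finset.mem_image, Finset.mem_univ, true_and, Function.comp_apply]
    constructor
    · rintro ⟨j, rfl⟩
      exact ⟨σ j, rfl⟩
    · rintro ⟨j, rfl⟩
      exact ⟨σ.symm j, by simp⟩
  rw [h1, h2, himg]

end LERW
end

section
/- Let (Ω, X_n, ℙ_x) be a Markov chain on a nonempty finite set V, let A ⊆ V, let V_A = {z ∈ V : ℙ_z(τ_A < ∞) = 1}, and let Ṽ ⊆ V. For x ∈ V_A, define the trace process X̃ by X̃_0 = X_0 and X̃_n = X_{τ̊_Ṽ^{(n)} ∧ τ_A} for n ≥ 1. Then ℙ_x-almost surely X̃_n ∈ V_A for every n, and X̃ is a Markov chain on V_A with transition kernel P̃(u, z) = ℙ_u(X_{τ̊_Ṽ ∧ τ_A} = z); that is, for every n ≥ 0 and all y_0, y_1, …, y_n ∈ V_A, ℙ_x(X̃_0 = y_0, X̃_1 = y_1, …, X̃_n = y_n) = 1_{x = y_0} · ∏_{i=1}^{n} P̃(y_{i-1}, y_i). -/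
open MeasureTheory

namespace LERW

variable {V : Type*} [DecidableEq V]

variable [Fintype V]

variable [MeasurableSpace V]

section NatInf

/-- `natInf T` is the infimum in `ℕ∞` of the coercion of `T ⊆ ℕ`. -/
noncomputable def natInf (T : Set ℕ) : ℕ∞ :=
  sInf {m : ℕ∞ | ∃ n : ℕ, m = (n : ℕ∞) ∧ n ∈ T}

lemma natInf_le {T : Set ℕ} {n : ℕ} (h : n ∈ T) : natInf T ≤ (n : ℕ∞) :=
  sInf_le ⟨n, rfl, h⟩

lemma le_natInf {T : Set ℕ} {k : ℕ∞} (h : ∀ n ∈ T, k ≤ (n : ℕ∞)) : k ≤ natInf T :=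
  le_sInf (by rintro m ⟨n, rfl, hn⟩; exact h n hn)

lemma natInf_eq_top {T : Set ℕ} (h : ∀ n, n ∉ T) : natInf T = ⊤ := by
  rw [natInf, sInf_eq_top]
  rintro m ⟨n, rfl, hn⟩
  exact absurd hn (h n)

lemma natInf_eq_coe {T : Set ℕ} (h : T.Nonempty) : natInf T = ((sInf T : ℕ) : ℕ∞) :=
  le_antisymm (natInf_le (Nat.sInf_mem h))
    (le_natInf fun n hn => by exact_mod_cast Nat.sInf_le hn)

lemma natInf_ne_top {T : Set ℕ} (h : T.Nonempty) : natInf T ≠ ⊤ := by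
  rw [natInf_eq_coe h]; exact ENat.coe_ne_top _

lemma natInf_eq_coe_iff {T : Set ℕ} {k : ℕ} :
    natInf T = (k : ℕ∞) ↔ k ∈ T ∧ ∀ i < k, i ∉ T := by
  constructor
  · intro h
    rcases T.eq_empty_or_nonempty with he | hne
    · exfalso
      have := natInf_eq_top (T := T) (by simp [he])
      rw [h] at this; exact ENat.coe_ne_top k this
    · rw [natInf_eq_coe hne] at h
      have hk : sInf T = k := by exact_mod_cast h
      subst hk
      exact ⟨Nat.sInf_mem hne, fun i hi => Nat.notMem_of_lt_sInf hi⟩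
  · rintro ⟨hk, hlt⟩
    refine le_antisymm (natInf_le hk) (le_natInf fun n hn => ?_)
    by_contra hc
    push_neg at hc
    exact hlt n (by exact_mod_cast hc) hn

lemma natInf_shift {T T' : Set ℕ} {m : ℕ}
    (h : ∀ k, k ∈ T ↔ m ≤ k ∧ (k - m) ∈ T') :
    natInf T = (m : ℕ∞) + natInf T' := by
  rcases T'.eq_empty_or_nonempty with he | hne
  · have hT : ∀ n, n ∉ T := by
      intro n hn
      have := (h n).1 hn
      rw [he] at this; exact this.2
    rw [natInf_eq_top hT, natInf_eq_top (by simp [he]),  add_top]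
  · have hTne : T.Nonempty := by
      obtain ⟨k', hk'⟩ := hne
      exact ⟨m + k', (h _).2 ⟨Nat.le_add_right _ _, by simpa using hk'⟩⟩
    rw [natInf_eq_coe hne, natInf_eq_coe hTne]
    have h1 : sInf T = m + sInf T' := by
      apply le_antisymm
      · exact Nat.sInf_le ((h _).2 ⟨Nat.le_add_right _ _, by simpa using Nat.sInf_mem hne⟩)
      · have hmem := Nat.sInf_mem hTne
        obtain ⟨hm, hmem'⟩ := (h _).1 hmem
        have := Nat.sInf_le hmem'
        omega
    rw [h1]; push_cast; ring

end NatInf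
section ChainAux

variable {V : Type*} [DecidableEq V] [Fintype V]
set_option linter.unusedSectionVars false

/-- The shift `θ_m` on trajectories. -/
def shiftω (m : ℕ) (ω : ℕ → V) : ℕ → V := fun k => ω (m + k)

lemma entryTime_eq_natInf (A : Finset V) (ω : ℕ → V) :
    entryTime A ω = natInf {n | ω n ∈ A} := rfl

lemma iterHit_succ (W : Finset V) (ω : ℕ → V) (n : ℕ) :
    iterHit W ω (n + 1) = natInf {k | iterHit W ω n < (k : ℕ∞) ∧ ω k ∈ W} := rfl

lemma iterHit_zero (W : Finset V) (ω : ℕ → V) : iterHit W ω 0 = 0 := rfl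

lemma iterHit_mono (W : Finset V) (ω : ℕ → V) (n : ℕ) :
    iterHit W ω n ≤ iterHit W ω (n + 1) := by
  rw [iterHit_succ]
  exact le_natInf fun k hk => le_of_lt hk.1

lemma iterHit_mono_le (W : Finset V) (ω : ℕ → V) {i n : ℕ} (h : i ≤ n) :
    iterHit W ω i ≤ iterHit W ω n := by
  induction n with
  | zero => simp_all
  | succ n ih =>
    rcases Nat.lt_or_ge i (n+1) with h' | h'
    · exact le_trans (ih (by omega)) (iterHit_mono W ω n)
    · have : i = n + 1 := by omega
      simp [this]

lemma enat_lt_coe {a : ℕ∞} {c : ℕ} (h : a < (c : ℕ∞)) : ∃ k : ℕ, a = (k : ℕ∞) ∧ k < c := by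
  have hne : a ≠ ⊤ := ne_top_of_lt h
  refine ⟨a.toNat, (ENat.coe_toNat hne).symm, ?_⟩
  have := (ENat.coe_toNat hne).symm ▸ h
  exact_mod_cast this

lemma eq_of_inf_eq {α : Type*} [LinearOrder α] {a b c : α} (h : a ⊓ b = c) (hc : c < b) :
    a = c := by
  rcases le_total a b with h' | h'
  · rwa [inf_eq_left.2 h'] at h
  · rw [inf_eq_right.2 h'] at h
    exact absurd (h ▸ hc) (lt_irrefl c)

lemma enat_add_inf (a b c : ℕ∞) : (a + b) ⊓ (a + c) = a + (b ⊓ c) := by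
  rcases le_total b c with h | h
  · rw [inf_eq_left.2 (add_le_add_right h a), inf_eq_left.2 h]
  · rw [inf_eq_right.2 (add_le_add_right h a), inf_eq_right.2 h]

/-! ### prefix determination -/

lemma entry_inf_agree_le {A : Finset V} {m : ℕ} {ω ω' : ℕ → V}
    (h : ∀ k ≤ m, ω k = ω' k) :
    entryTime A ω' ⊓ ((m : ℕ∞) + 1) ≤ entryTime A ω ⊓ ((m : ℕ∞) + 1) := by
  rcases lt_or_ge (entryTime A ω) ((m : ℕ∞) + 1) with hlt | hge
  · obtain ⟨k, hk, hkm⟩ := enat_lt_coe (by exact_mod_cast hlt)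
    have hkm' : k ≤ m := by omega
    rw [entryTime_eq_natInf] at hk
    have hkA : ω k ∈ A := (natInf_eq_coe_iff.1 hk).1
    have h2 : entryTime A ω' ≤ (k : ℕ∞) := natInf_le (show ω' k ∈ A from h k hkm' ▸ hkA)
    have h3 : entryTime A ω ⊓ ((m : ℕ∞) + 1) = (k : ℕ∞) := by
      rw [entryTime_eq_natInf, hk]
      exact inf_eq_left.2 (le_of_lt (by exact_mod_cast hkm))
    rw [h3]
    exact le_trans inf_le_left h2
  · rw [inf_eq_right.2 hge]
    exact inf_le_right

lemma entry_inf_agree {A : Finset V} {m : ℕ} {ω ω' : ℕ → V}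
    (h : ∀ k ≤ m, ω k = ω' k) :
    entryTime A ω ⊓ ((m : ℕ∞) + 1) = entryTime A ω' ⊓ ((m : ℕ∞) + 1) :=
  le_antisymm (entry_inf_agree_le fun k hk => (h k hk).symm) (entry_inf_agree_le h)

lemma iterHit_inf_agree {W : Finset V} {m : ℕ} {ω ω' : ℕ → V}
    (h : ∀ k ≤ m, ω k = ω' k) (n : ℕ) :
    iterHit W ω n ⊓ ((m : ℕ∞) + 1) = iterHit W ω' n ⊓ ((m : ℕ∞) + 1) := by
  have key : ∀ (σ σ' : ℕ → V), (∀ k ≤ m, σ k = σ' k) → ∀ n,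
      iterHit W σ n ⊓ ((m : ℕ∞) + 1) = iterHit W σ' n ⊓ ((m : ℕ∞) + 1) →
      iterHit W σ' (n + 1) ⊓ ((m : ℕ∞) + 1) ≤ iterHit W σ (n + 1) ⊓ ((m : ℕ∞) + 1) := by
    intro σ σ' hag n hn
    rcases lt_or_ge (iterHit W σ (n + 1)) ((m : ℕ∞) + 1) with hlt | hge
    · obtain ⟨k, hk, hkm⟩ := enat_lt_coe (by exact_mod_cast hlt)
      have hkm' : k ≤ m := by omega
      rw [iterHit_succ] at hk
      obtain ⟨hlt', hkW⟩ := (natInf_eq_coe_iff.1 hk).1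
      have hσ'lt : iterHit W σ' n < (k : ℕ∞) := by
        have h1 : iterHit W σ' n ⊓ ((m : ℕ∞) + 1) < (k : ℕ∞) := by
          rw [← hn]
          exact lt_of_le_of_lt inf_le_left hlt'
        rcases inf_lt_iff.1 h1 with h2 | h2
        · exact h2
        · exact absurd h2 (by exact_mod_cast Nat.not_lt.2 (by omega))
      have h2 : iterHit W σ' (n + 1) ≤ (k : ℕ∞) := by
        rw [iterHit_succ]
        exact natInf_le ⟨hσ'lt, hag k hkm' ▸ hkW⟩
      calc iterHit W σ' (n + 1) ⊓ ((m : ℕ∞) + 1) ≤ (k : ℕ∞) := le_trans inf_le_left h2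
      _ = iterHit W σ (n + 1) ⊓ ((m : ℕ∞) + 1) := by
          rw [show iterHit W σ (n+1) = (k : ℕ∞) from by rw [iterHit_succ]; exact hk]
          symm; exact inf_eq_left.2 (le_of_lt (by exact_mod_cast hkm))
    · rw [inf_eq_right.2 hge]
      exact inf_le_right
  induction n with
  | zero => rfl
  | succ n ih =>
    exact le_antisymm (key ω' ω (fun k hk => (h k hk).symm) n ih.symm) (key ω ω' h n ih)

end ChainAux
section MTAux

variable {V : Type*} [DecidableEq V] [Fintype V]
set_option linter.unusedSectionVars false

/-- `τ̊_W^{(n)} ∧ τ_A` as an element of `ℕ∞`. -/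
noncomputable def mT (W A : Finset V) (ω : ℕ → V) (n : ℕ) : ℕ∞ :=
  iterHit W ω n ⊓ entryTime A ω

lemma traceTime_eq_toNat (W A : Finset V) (ω : ℕ → V) (n : ℕ) :
    traceTime W A ω n = (mT W A ω n).toNat := rfl

lemma traceProc_eq (W A : Finset V) (ω : ℕ → V) (n : ℕ) :
    traceProc W A ω n = ω ((mT W A ω n).toNat) := rfl

lemma mT_zero (W A : Finset V) (ω : ℕ → V) : mT W A ω 0 = 0 := by
  rw [mT, iterHit_zero]
  exact inf_eq_left.2 zero_le

lemma traceProc_zero (W A : Finset V) (ω : ℕ → V) : traceProc W A ω 0 = ω 0 := by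
  rw [traceProc_eq, mT_zero]; rfl

lemma mT_mono (W A : Finset V) (ω : ℕ → V) {i n : ℕ} (h : i ≤ n) :
    mT W A ω i ≤ mT W A ω n :=
  inf_le_inf_right _ (iterHit_mono_le W ω h)

lemma mT_le_entry (W A : Finset V) (ω : ℕ → V) (n : ℕ) :
    mT W A ω n ≤ entryTime A ω := inf_le_right

lemma inf_inf_helper {α : Type*} [Lattice α] (a b c : α) :
    (a ⊓ b) ⊓ c = (a ⊓ c) ⊓ (b ⊓ c) :=
  le_antisymm (le_inf (inf_le_inf_right c inf_le_left) (inf_le_inf_right c inf_le_right))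
    (le_inf (le_inf (le_trans inf_le_left inf_le_left) (le_trans inf_le_right inf_le_left))
      (le_trans inf_le_left inf_le_right))

lemma mT_inf_agree {W A : Finset V} {m : ℕ} {ω ω' : ℕ → V}
    (h : ∀ k ≤ m, ω k = ω' k) (n : ℕ) :
    mT W A ω n ⊓ ((m : ℕ∞) + 1) = mT W A ω' n ⊓ ((m : ℕ∞) + 1) := by
  rw [mT, mT, inf_inf_helper, inf_inf_helper (iterHit W ω' n), entry_inf_agree h,
    iterHit_inf_agree h n]

lemma mT_agree {W A : Finset V} {m : ℕ} {ω ω' : ℕ → V}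
    (h : ∀ k ≤ m, ω k = ω' k) {n k : ℕ} (hk : k ≤ m) (hmt : mT W A ω n = (k : ℕ∞)) :
    mT W A ω' n = (k : ℕ∞) := by
  have hlt : (k : ℕ∞) < (m : ℕ∞) + 1 := by exact_mod_cast Nat.lt_succ_of_le hk
  have h1 : mT W A ω' n ⊓ ((m : ℕ∞) + 1) = (k : ℕ∞) := by
    rw [← mT_inf_agree h n, hmt]
    exact inf_eq_left.2 (le_of_lt hlt)
  exact eq_of_inf_eq h1 hlt

/-! ### shift lemmas -/

lemma entry_shift {A : Finset V} {m : ℕ} {ω : ℕ → V} (h : (m : ℕ∞) ≤ entryTime A ω) :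
    entryTime A ω = (m : ℕ∞) + entryTime A (shiftω m ω) := by
  rw [entryTime_eq_natInf, entryTime_eq_natInf]
  apply natInf_shift
  intro k
  constructor
  · intro hk
    have hmk : m ≤ k := by
      by_contra hc
      have := natInf_le (T := {n | ω n ∈ A}) hk
      rw [← entryTime_eq_natInf] at this
      have := le_trans h this
      exact absurd (by exact_mod_cast this) hc
    refine ⟨hmk, ?_⟩
    show ω (m + (k - m)) ∈ A
    rwa [show m + (k - m) = k by omega]
  · rintro ⟨hmk, hk⟩
    have : ω (m + (k - m)) ∈ A := hk
    rwa [show m + (k - m) = k by omega] at this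

lemma iterHit_one_shift (W : Finset V) (m : ℕ) (ω : ℕ → V) :
    iterHit W (shiftω m ω) 1 = natInf {k | 0 < k ∧ ω (m + k) ∈ W} := by
  rw [iterHit_succ, iterHit_zero]
  congr 1
  ext k
  have h0 : ((0 : ℕ∞) < (k : ℕ∞)) ↔ 0 < k := by exact_mod_cast Iff.rfl
  simp [shiftω, h0]

lemma iterHit_shift {W : Finset V} {m n : ℕ} {ω : ℕ → V} (h : iterHit W ω n = (m : ℕ∞)) :
    iterHit W ω (n + 1) = (m : ℕ∞) + iterHit W (shiftω m ω) 1 := by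
  rw [iterHit_succ, h, iterHit_one_shift]
  apply natInf_shift
  intro k
  constructor
  · rintro ⟨h1, h2⟩
    have hmk : m < k := by exact_mod_cast h1
    refine ⟨le_of_lt hmk, by omega, ?_⟩
    rwa [show m + (k - m) = k by omega]
  · rintro ⟨h1, h2, h3⟩
    have hmk : m < k := by omega
    refine ⟨by exact_mod_cast hmk, ?_⟩
    rwa [show m + (k - m) = k by omega] at h3

lemma entry_shift_zero {A : Finset V} {m : ℕ} {ω : ℕ → V} (h : ω m ∈ A) :
    entryTime A (shiftω m ω) = 0 := by
  rw [entryTime_eq_natInf]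
  refine le_antisymm ?_ zero_le
  have : (0 : ℕ) ∈ {n | shiftω m ω n ∈ A} := by simpa [shiftω] using h
  simpa using natInf_le this

lemma mT_shift {W A : Finset V} {m n : ℕ} {ω : ℕ → V} (h : mT W A ω n = (m : ℕ∞)) :
    mT W A ω (n + 1) = (m : ℕ∞) + mT W A (shiftω m ω) 1 := by
  have hiter : (m : ℕ∞) ≤ iterHit W ω n := h ▸ inf_le_left
  have hent : (m : ℕ∞) ≤ entryTime A ω := h ▸ inf_le_right
  rcases eq_or_lt_of_le hent with heq | hlt
  · -- entry = m : already in A at time m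
    have hmA : ω m ∈ A := by
      rw [entryTime_eq_natInf] at heq
      exact (natInf_eq_coe_iff.1 heq.symm).1
    have h0 : mT W A (shiftω m ω) 1 = 0 := by
      rw [mT, entry_shift_zero hmA]
      exact inf_eq_right.2 zero_le
    rw [h0, add_zero, mT, ← heq]
    exact inf_eq_right.2 (le_trans hiter (iterHit_mono W ω n))
  · -- entry > m : iterHit n = m
    have hIH : iterHit W ω n = (m : ℕ∞) := eq_of_inf_eq h hlt
    rw [mT, iterHit_shift hIH, entry_shift (le_of_lt hlt), enat_add_inf, mT]

lemma traceProc_shift {W A : Finset V} {m n t : ℕ} {ω : ℕ → V}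
    (hn : mT W A ω n = (m : ℕ∞)) (ht : mT W A (shiftω m ω) 1 = (t : ℕ∞)) :
    traceProc W A ω (n + 1) = traceProc W A (shiftω m ω) 1 := by
  rw [traceProc_eq, traceProc_eq, mT_shift hn, ht]
  have : ((m : ℕ∞) + (t : ℕ∞)) = ((m + t : ℕ) : ℕ∞) := by push_cast; ring
  rw [this, ENat.toNat_coe, ENat.toNat_coe]
  simp [shiftω]

end MTAux
section DetAux

open scoped Classical

variable {V : Type*} [DecidableEq V] [Fintype V] [MeasurableSpace V] [MeasurableSingletonClass V]
set_option linter.unusedSectionVars false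

/-- A set of trajectories determined by the coordinates `0, …, m`. -/
def Det (m : ℕ) (S : Set (ℕ → V)) : Prop :=
  ∀ ω ω' : ℕ → V, (∀ k ≤ m, ω k = ω' k) → ω ∈ S → ω' ∈ S

lemma Det.mono {m m' : ℕ} {S : Set (ℕ → V)} (hS : Det m S) (h : m ≤ m') : Det m' S :=
  fun ω ω' hag => hS ω ω' (fun k hk => hag k (le_trans hk h))

lemma Det.inter {m : ℕ} {S T : Set (ℕ → V)} (hS : Det m S) (hT : Det m T) : Det m (S ∩ T) :=
  fun ω ω' hag h => ⟨hS ω ω' hag h.1, hT ω ω' hag h.2⟩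

lemma Det.iUnion {m : ℕ} {ι : Sort*} {f : ι → Set (ℕ → V)} (hf : ∀ i, Det m (f i)) :
    Det m (⋃ i, f i) := by
  intro ω ω' hag h
  obtain ⟨i, hi⟩ := Set.mem_iUnion.1 h
  exact Set.mem_iUnion.2 ⟨i, hf i ω ω' hag hi⟩

/-- Cylinder event. -/
def cylE (v : ℕ → V) (m : ℕ) : Set (ℕ → V) := {ω | ∀ i ≤ m, ω i = v i}

lemma measurableSet_cylE (v : ℕ → V) (m : ℕ) : MeasurableSet (cylE v m) := by
  have : cylE v m = ⋂ (i : ℕ) (_ : i ≤ m), (fun ω : ℕ → V => ω i) ⁻¹' {v i} := by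
    ext ω; simp [cylE]
  rw [this]
  exact MeasurableSet.iInter fun i => MeasurableSet.iInter fun _ =>
    (measurable_pi_apply i) (measurableSet_singleton _)

/-- Extension of a finite word to a full trajectory. -/
def extF {m : ℕ} (y : Fin (m + 1) → V) : ℕ → V := fun i => y ⟨min i m, by omega⟩

lemma extF_agree {m : ℕ} (ω : ℕ → V) (k : ℕ) (hk : k ≤ m) :
    extF (fun i : Fin (m + 1) => ω i) k = ω k := by
  simp [extF, Nat.min_eq_left hk]

lemma extF_eq {m : ℕ} (y : Fin (m + 1) → V) (k : ℕ) (hk : k ≤ m) :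
    extF y k = y ⟨k, by omega⟩ := by
  simp [extF, Nat.min_eq_left hk]

/-- The index set of words describing a determined set. -/
noncomputable def detIdx (m : ℕ) (S : Set (ℕ → V)) : Finset (Fin (m + 1) → V) :=
  Finset.univ.filter (fun y => extF y ∈ S)

lemma det_eq_biUnion {m : ℕ} {S : Set (ℕ → V)} (hS : Det m S) :
    S = ⋃ y ∈ detIdx m S, cylE (extF y) m := by
  ext ω
  simp only [Set.mem_iUnion, detIdx, Finset.mem_filter, Finset.mem_univ, true_and]
  constructor
  · intro hω
    refine ⟨fun i : Fin (m + 1) => ω i, ?_, ?_⟩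
    · exact hS ω _ (fun k hk => (extF_agree ω k hk).symm) hω
    · intro i hi
      exact (extF_agree ω i hi).symm
  · rintro ⟨y, hy, hcyl⟩
    exact hS (extF y) ω (fun k hk => (hcyl k hk).symm) hy

lemma cylE_disjoint {m : ℕ} {y y' : Fin (m + 1) → V} (h : y ≠ y') :
    Disjoint (cylE (extF y) m) (cylE (extF y') m) := by
  rw [Set.disjoint_left]
  intro ω h1 h2
  apply h
  funext i
  have e1 := h1 i.1 (by omega)
  have e2 := h2 i.1 (by omega)
  rw [extF_eq _ _ (by omega)] at e1 e2
  rw [show (⟨i.1, by omega⟩ : Fin (m+1)) = i from Fin.ext rfl] at e1 e2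
  rw [← e1, ← e2]

lemma Det.measurableSet {m : ℕ} {S : Set (ℕ → V)} (hS : Det m S) : MeasurableSet S := by
  rw [det_eq_biUnion hS]
  exact (detIdx m S).measurableSet_biUnion (fun y _ => measurableSet_cylE _ _)

lemma det_measure (μ : Measure (ℕ → V)) {m : ℕ} {S : Set (ℕ → V)} (hS : Det m S) :
    μ S = ∑ y ∈ detIdx m S, μ (cylE (extF y) m) := by
  conv_lhs => rw [det_eq_biUnion hS]
  exact measure_biUnion_finset
    (fun y _ y' _ hne => cylE_disjoint hne) (fun y _ => measurableSet_cylE _ _)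

end DetAux
section MarkovAux

open scoped Classical

variable {V : Type*} [DecidableEq V] [Fintype V] [MeasurableSpace V] [MeasurableSingletonClass V]
variable {P : V → V → ℝ} {μ : V → Measure (ℕ → V)}
set_option linter.unusedSectionVars false

/-- The weight of a word. -/
noncomputable def wgt (P : V → V → ℝ) (a : V) (v : ℕ → V) (m : ℕ) : ℝ :=
  (if a = v 0 then (1 : ℝ) else 0) * ∏ i ∈ Finset.Icc 1 m, P (v (i - 1)) (v i)

lemma wgt_nonneg (hP0 : ∀ a b : V, 0 ≤ P a b) (a : V) (v : ℕ → V) (m : ℕ) :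
    0 ≤ wgt P a v m := by
  apply mul_nonneg
  · split <;> norm_num
  · exact Finset.prod_nonneg fun i _ => hP0 _ _

lemma measure_cylE
    (hlaw : ∀ (a : V) (n : ℕ) (y : ℕ → V),
      μ a {ω | ∀ i ≤ n, ω i = y i} =
        ENNReal.ofReal ((if a = y 0 then (1 : ℝ) else 0) *
          ∏ i ∈ Finset.Icc 1 n, P (y (i - 1)) (y i)))
    (a : V) (v : ℕ → V) (m : ℕ) :
    μ a (cylE v m) = ENNReal.ofReal (wgt P a v m) := hlaw a m v

/-- Gluing two words, overlapping at position `m`. -/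
def glueW (v u : ℕ → V) (m : ℕ) : ℕ → V := fun i => if i ≤ m then v i else u (i - m)

lemma Icc_eq_Ioc (m n : ℕ) : Finset.Icc (m + 1) n = Finset.Ioc m n := by
  ext k
  simp only [Finset.mem_Icc, Finset.mem_Ioc]
  omega

lemma Icc_one_eq_Ioc (n : ℕ) : Finset.Icc 1 n = Finset.Ioc 0 n := Icc_eq_Ioc 0 n

lemma cylE_inter_shift {v u : ℕ → V} {m j : ℕ} (hu : u 0 = v m) :
    cylE v m ∩ shiftω m ⁻¹' cylE u j = cylE (glueW v u m) (m + j) := by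
  ext ω
  constructor
  · rintro ⟨h1, h2⟩
    intro i hi
    by_cases him : i ≤ m
    · rw [glueW, if_pos him]; exact h1 i him
    · push_neg at him
      have : ω (m + (i - m)) = u (i - m) := h2 (i - m) (by omega)
      rw [show m + (i - m) = i by omega] at this
      rw [glueW, if_neg (by omega)]
      exact this
  · intro h
    constructor
    · intro i hi
      have := h i (by omega)
      rwa [glueW, if_pos hi] at this
    · intro i hi
      have := h (m + i) (by omega)
      rcases Nat.eq_zero_or_pos i with rfl | hpos
      · show ω (m + 0) = u 0
        rw [hu]
        rwa [glueW, if_pos (by omega)] at this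
      · show ω (m + i) = u i
        rw [glueW, if_neg (by omega), show m + i - m = i by omega] at this
        exact this

lemma wgt_glue {v u : ℕ → V} {m j : ℕ} (hu : u 0 = v m) (a : V) :
    wgt P a (glueW v u m) (m + j) = wgt P a v m * wgt P (v m) u j := by
  rw [wgt, wgt, wgt]
  have h0 : glueW v u m 0 = v 0 := by rw [glueW, if_pos (by omega)]
  rw [h0, ← hu, if_pos rfl, one_mul]
  have hsplit : ∏ i ∈ Finset.Icc 1 (m + j), P (glueW v u m (i - 1)) (glueW v u m i)
      = (∏ i ∈ Finset.Icc 1 m, P (glueW v u m (i - 1)) (glueW v u m i)) *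
        ∏ i ∈ Finset.Icc (m + 1) (m + j), P (glueW v u m (i - 1)) (glueW v u m i) := by
    rw [Icc_one_eq_Ioc, Icc_one_eq_Ioc, Icc_eq_Ioc,
      Finset.prod_Ioc_consecutive _ (by omega : 0 ≤ m) (by omega : m ≤ m + j)]
  rw [hsplit]
  have h1 : ∏ i ∈ Finset.Icc 1 m, P (glueW v u m (i - 1)) (glueW v u m i)
      = ∏ i ∈ Finset.Icc 1 m, P (v (i - 1)) (v i) := by
    apply Finset.prod_congr rfl
    intro i hi
    rw [Finset.mem_Icc] at hi
    rw [glueW, glueW, if_pos (by omega), if_pos (by omega)]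
  have h2 : ∏ i ∈ Finset.Icc (m + 1) (m + j), P (glueW v u m (i - 1)) (glueW v u m i)
      = ∏ i ∈ Finset.Icc 1 j, P (u (i - 1)) (u i) := by
    rw [Icc_eq_Ioc, Icc_one_eq_Ioc, show Finset.Ioc m (m+j) = (Finset.Ioc 0 j).map (addLeftEmbedding m) from by rw [Finset.map_add_left_Ioc]; norm_num, Finset.prod_map]
    apply Finset.prod_congr rfl
    intro i hi
    rw [Finset.mem_Ioc] at hi
    have e1 : glueW v u m (addLeftEmbedding m i) = u i := by
      show glueW v u m (m + i) = u i
      rw [glueW, if_neg (by omega), show m + i - m = i by omega]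
    have e2 : glueW v u m (addLeftEmbedding m i - 1) = u (i - 1) := by
      show glueW v u m (m + i - 1) = u (i - 1)
      rcases Nat.eq_or_lt_of_le hi.1 with h1 | h1
      · rw [show m + i - 1 = m by omega, glueW, if_pos le_rfl, ← hu,
          show i - 1 = 0 by omega]
      · rw [glueW, if_neg (by omega), show m + i - 1 - m = i - 1 by omega]
    rw [e1, e2]
  rw [h1, h2]
  ring

lemma cyl_markov
    (hP0 : ∀ a b : V, 0 ≤ P a b)
    (hlaw : ∀ (a : V) (n : ℕ) (y : ℕ → V),
      μ a {ω | ∀ i ≤ n, ω i = y i} =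
        ENNReal.ofReal ((if a = y 0 then (1 : ℝ) else 0) *
          ∏ i ∈ Finset.Icc 1 n, P (y (i - 1)) (y i)))
    (a : V) (v u : ℕ → V) (m j : ℕ) :
    μ a (cylE v m ∩ shiftω m ⁻¹' cylE u j) = μ a (cylE v m) * μ (v m) (cylE u j) := by
  by_cases hu : u 0 = v m
  · rw [cylE_inter_shift hu, measure_cylE hlaw, measure_cylE hlaw, measure_cylE hlaw,
      wgt_glue hu, ENNReal.ofReal_mul (wgt_nonneg hP0 _ _ _)]
  · have hempty : cylE v m ∩ shiftω m ⁻¹' cylE u j = ∅ := by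
      ext ω
      simp only [Set.mem_inter_iff, Set.mem_empty_iff_false, iff_false]
      rintro ⟨h1, h2⟩
      have e1 : ω m = v m := h1 m le_rfl
      have e2 : ω (m + 0) = u 0 := h2 0 (by omega)
      rw [show m + 0 = m by omega] at e2
      exact hu (by rw [← e1, ← e2])
    rw [hempty, measure_empty]
    have : μ (v m) (cylE u j) = 0 := by
      rw [measure_cylE hlaw, wgt, if_neg (fun h => hu h.symm), zero_mul, ENNReal.ofReal_zero]
    rw [this, mul_zero]

lemma det_markov
    (hP0 : ∀ a b : V, 0 ≤ P a b)
    (hlaw : ∀ (a : V) (n : ℕ) (y : ℕ → V),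
      μ a {ω | ∀ i ≤ n, ω i = y i} =
        ENNReal.ofReal ((if a = y 0 then (1 : ℝ) else 0) *
          ∏ i ∈ Finset.Icc 1 n, P (y (i - 1)) (y i)))
    (a z : V) {S F : Set (ℕ → V)} {m j : ℕ}
    (hS : Det m S) (hz : ∀ ω ∈ S, ω m = z) (hF : Det j F) :
    μ a (S ∩ shiftω m ⁻¹' F) = μ a S * μ z F := by
  have hSd := det_eq_biUnion hS
  have hFd := det_eq_biUnion hF
  have hrw : S ∩ shiftω m ⁻¹' F = ⋃ y ∈ detIdx m S, ⋃ u ∈ detIdx j F,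
      (cylE (extF y) m ∩ shiftω m ⁻¹' cylE (extF u) j) := by
    ext ω
    constructor
    · rintro ⟨h1, h2⟩
      rw [hSd] at h1
      rw [Set.mem_preimage, hFd] at h2
      simp only [Set.mem_iUnion] at h1 h2 ⊢
      obtain ⟨y, hy, hyc⟩ := h1
      obtain ⟨u, hu, huc⟩ := h2
      exact ⟨y, hy, u, hu, hyc, huc⟩
    · intro h
      simp only [Set.mem_iUnion] at h
      obtain ⟨y, hy, u, hu, hyc, huc⟩ := h
      constructor
      · rw [hSd]; simp only [Set.mem_iUnion]; exact ⟨y, hy, hyc⟩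
      · rw [Set.mem_preimage, hFd]; simp only [Set.mem_iUnion]; exact ⟨u, hu, huc⟩
  have hshift : Measurable (shiftω (V := V) m) :=
    measurable_pi_lambda _ (fun k => measurable_pi_apply (m + k))
  rw [hrw]
  rw [measure_biUnion_finset (f := fun y => ⋃ u ∈ detIdx j F,
      (cylE (extF y) m ∩ shiftω m ⁻¹' cylE (extF u) j))
    (fun y _ y' _ hne => by
      apply Set.disjoint_left.2
      intro ω hω hω'
      simp only [Set.mem_iUnion] at hω hω'
      obtain ⟨u, _, hc, _⟩ := hω
      obtain ⟨u', _, hc', _⟩ := hω'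
      exact Set.disjoint_left.1 (cylE_disjoint hne) hc hc')
    (fun y _ => (detIdx j F).measurableSet_biUnion (fun u _ =>
      ((measurableSet_cylE _ _).inter (hshift (measurableSet_cylE _ _)))))]
  have hterm : ∀ y ∈ detIdx m S,
      μ a (⋃ u ∈ detIdx j F, (cylE (extF y) m ∩ shiftω m ⁻¹' cylE (extF u) j))
      = ∑ u ∈ detIdx j F, μ a (cylE (extF y) m) * μ z (cylE (extF u) j) := by
    intro y hy
    rw [measure_biUnion_finset
      (fun u _ u' _ hne => by
        have := (cylE_disjoint hne).preimage (shiftω m)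
        exact Disjoint.mono (Set.inter_subset_right) (Set.inter_subset_right) this)
      (fun u _ => ((measurableSet_cylE _ _).inter (hshift (measurableSet_cylE _ _))))]
    apply Finset.sum_congr rfl
    intro u _
    have hzy : extF y m = z := by
      apply hz
      have : y ∈ Finset.univ.filter (fun y : Fin (m+1) → V => extF y ∈ S) := hy
      exact (Finset.mem_filter.1 this).2
    rw [cyl_markov hP0 hlaw, hzy]
  rw [Finset.sum_congr rfl hterm, ← Finset.sum_mul_sum, ← det_measure (μ a) hS,
    ← det_measure (μ z) hF]

lemma det_markov_lim
    (hP0 : ∀ a b : V, 0 ≤ P a b)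
    (hlaw : ∀ (a : V) (n : ℕ) (y : ℕ → V),
      μ a {ω | ∀ i ≤ n, ω i = y i} =
        ENNReal.ofReal ((if a = y 0 then (1 : ℝ) else 0) *
          ∏ i ∈ Finset.Icc 1 n, P (y (i - 1)) (y i)))
    (a z : V) {S : Set (ℕ → V)} {m : ℕ} {F : Set (ℕ → V)} {Fseq : ℕ → Set (ℕ → V)}
    (hS : Det m S) (hz : ∀ ω ∈ S, ω m = z)
    (hmono : Monotone Fseq) (hdet : ∀ j, Det j (Fseq j)) (hunion : F = ⋃ j, Fseq j) :
    μ a (S ∩ shiftω m ⁻¹' F) = μ a S * μ z F := by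
  have h1 : S ∩ shiftω m ⁻¹' F = ⋃ j, (S ∩ shiftω m ⁻¹' Fseq j) := by
    rw [hunion, Set.preimage_iUnion, Set.inter_iUnion]
  have hmono1 : Monotone (fun j => S ∩ shiftω m ⁻¹' Fseq j) := by
    intro i j hij
    exact Set.inter_subset_inter_right _ (Set.preimage_mono (hmono hij))
  rw [h1, hmono1.measure_iUnion]
  have h2 : ∀ j, μ a (S ∩ shiftω m ⁻¹' Fseq j) = μ a S * μ z (Fseq j) :=
    fun j => det_markov hP0 hlaw a z hS hz (hdet j)
  simp only [h2]
  rw [hunion, hmono.measure_iUnion, ENNReal.mul_iSup]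

end MarkovAux
section Events

open scoped Classical

variable {V : Type*} [DecidableEq V] [Fintype V] [MeasurableSpace V] [MeasurableSingletonClass V]
variable {P : V → V → ℝ} {μ : V → Measure (ℕ → V)}
set_option linter.unusedSectionVars false

/-- The event that `A` is ever visited. -/
def hitS (A : Finset V) : Set (ℕ → V) := {ω | ∃ n : ℕ, ω n ∈ A}

lemma hitS_iff {A : Finset V} {ω : ℕ → V} : ω ∈ hitS A ↔ entryTime A ω ≠ ⊤ := by
  rw [entryTime_eq_natInf]
  constructor
  · rintro ⟨n, hn⟩ htop
    have h1 := natInf_le (T := {n | ω n ∈ A}) hn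
    rw [htop] at h1
    exact absurd h1 (not_le.2 (ENat.coe_lt_top n))
  · intro h
    by_contra hc
    apply h
    apply natInf_eq_top
    intro n hn
    exact hc ⟨n, hn⟩

/-- Truncated hit events. -/
def hitSeq (A : Finset V) (j : ℕ) : Set (ℕ → V) := {ω | ∃ k ≤ j, ω k ∈ A}

lemma det_hitSeq (A : Finset V) (j : ℕ) : Det j (hitSeq A j) := by
  rintro ω ω' hag ⟨k, hk, hkA⟩
  exact ⟨k, hk, hag k hk ▸ hkA⟩

lemma hitSeq_mono (A : Finset V) : Monotone (hitSeq A) := by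
  rintro i j hij ω ⟨k, hk, hkA⟩
  exact ⟨k, le_trans hk hij, hkA⟩

lemma hitS_eq_iUnion (A : Finset V) : hitS A = ⋃ j, hitSeq A j := by
  ext ω
  constructor
  · rintro ⟨n, hn⟩
    exact Set.mem_iUnion.2 ⟨n, n, le_rfl, hn⟩
  · intro h
    obtain ⟨j, k, _, hk⟩ := Set.mem_iUnion.1 h
    exact ⟨k, hk⟩

lemma measurableSet_hitS (A : Finset V) : MeasurableSet (hitS A) := by
  rw [hitS_eq_iUnion]
  exact MeasurableSet.iUnion fun j => (det_hitSeq A j).measurableSet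

lemma measure_inter_hitS {A : Finset V} {a : V} [IsProbabilityMeasure (μ a)]
    (ha : μ a (hitS A) = 1) (S : Set (ℕ → V)) :
    μ a (S ∩ hitS A) = μ a S := by
  apply le_antisymm (measure_mono Set.inter_subset_left)
  have hc : μ a (hitS A)ᶜ = 0 := by
    rw [measure_compl (measurableSet_hitS A) (measure_ne_top _ _), ha, measure_univ, tsub_self]
  calc μ a S ≤ μ a ((S ∩ hitS A) ∪ (hitS A)ᶜ) := by
        apply measure_mono
        intro ω hω
        by_cases h : ω ∈ hitS A
        · exact Or.inl ⟨hω, h⟩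
        · exact Or.inr h
    _ ≤ μ a (S ∩ hitS A) + μ a (hitS A)ᶜ := measure_union_le _ _
    _ = μ a (S ∩ hitS A) := by rw [hc, add_zero]

lemma det_mT_eq {W A : Finset V} {n k m : ℕ} (hk : k ≤ m) :
    Det m {ω : ℕ → V | mT W A ω n = (k : ℕ∞)} :=
  fun ω ω' hag h => mT_agree hag hk h

lemma enat_exists_coe {a : ℕ∞} (h : a ≠ ⊤) : ∃ k : ℕ, a = (k : ℕ∞) :=
  ⟨a.toNat, (ENat.coe_toNat h).symm⟩

lemma enat_le_coe {a : ℕ∞} {m : ℕ} (h : a ≤ (m : ℕ∞)) : ∃ k : ℕ, k ≤ m ∧ a = (k : ℕ∞) := by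
  have hne : a ≠ ⊤ := by
    intro ht
    rw [ht] at h
    exact absurd h (not_le.2 (ENat.coe_lt_top m))
  obtain ⟨k, hk⟩ := enat_exists_coe hne
  refine ⟨k, ?_, hk⟩
  rw [hk] at h
  exact_mod_cast h

/-- The trace events. -/
def traceE (W A : Finset V) (y : ℕ → V) (n : ℕ) : Set (ℕ → V) :=
  {ω | ∀ i ≤ n, traceProc W A ω i = y i}

/-- The basic stopped pieces of a trace event. -/
def traceG (W A : Finset V) (y : ℕ → V) (n m : ℕ) : Set (ℕ → V) :=
  traceE W A y n ∩ {ω | mT W A ω n = (m : ℕ∞)}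

lemma det_traceG (W A : Finset V) (y : ℕ → V) (n m : ℕ) : Det m (traceG W A y n m) := by
  rintro ω ω' hag ⟨hE, hmT⟩
  have hmT' : mT W A ω' n = (m : ℕ∞) := mT_agree hag le_rfl hmT
  refine ⟨?_, hmT'⟩
  intro i hi
  obtain ⟨k, hkm, hk⟩ := enat_le_coe (show mT W A ω i ≤ (m : ℕ∞) from hmT ▸ mT_mono W A ω hi)
  have hk' : mT W A ω' i = (k : ℕ∞) := mT_agree hag hkm hk
  rw [traceProc_eq, hk', ENat.toNat_coe, ← hag k hkm]
  rw [← hE i hi, traceProc_eq, hk, ENat.toNat_coe]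

lemma traceG_last {W A : Finset V} {y : ℕ → V} {n m : ℕ} {ω : ℕ → V}
    (h : ω ∈ traceG W A y n m) : ω m = y n := by
  obtain ⟨hE, hmT⟩ := h
  have := hE n le_rfl
  rwa [traceProc_eq, hmT, ENat.toNat_coe] at this

/-- The approximating sequence for `{traceProc 1 = z} ∩ hitS A`. -/
def traceF1seq (W A : Finset V) (z : V) (j : ℕ) : Set (ℕ → V) :=
  (⋃ k ∈ Finset.range (j + 1),
    ({ω : ℕ → V | mT W A ω 1 = (k : ℕ∞)} ∩ {ω | ω k = z})) ∩ hitSeq A j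

lemma det_traceF1seq (W A : Finset V) (z : V) (j : ℕ) : Det j (traceF1seq W A z j) := by
  apply Det.inter _ (det_hitSeq A j)
  apply Det.iUnion
  intro k
  apply Det.iUnion
  intro hk
  rw [Finset.mem_range] at hk
  exact Det.inter (det_mT_eq (by omega)) (fun ω ω' hag h => by
    simpa [← hag k (by omega)] using h)

lemma traceF1seq_mono (W A : Finset V) (z : V) : Monotone (traceF1seq W A z) := by
  intro i j hij
  apply Set.inter_subset_inter _ (hitSeq_mono A hij)
  apply Set.iUnion_mono
  intro k
  apply Set.iUnion_subset
  intro hk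
  rw [Finset.mem_range] at hk
  exact Set.subset_iUnion_of_subset (Finset.mem_range.2 (by omega)) (le_refl _)

lemma traceF1_eq_iUnion (W A : Finset V) (z : V) :
    {ω : ℕ → V | traceProc W A ω 1 = z} ∩ hitS A = ⋃ j, traceF1seq W A z j := by
  ext ω
  constructor
  · rintro ⟨htr, hhit⟩
    have hent : entryTime A ω ≠ ⊤ := hitS_iff.1 hhit
    obtain ⟨e, he⟩ := enat_exists_coe hent
    obtain ⟨k, hke, hk⟩ := enat_le_coe (show mT W A ω 1 ≤ (e : ℕ∞) from he ▸ mT_le_entry W A ω 1)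
    obtain ⟨n0, hn0⟩ := hhit
    refine Set.mem_iUnion.2 ⟨max e n0, ?_, ⟨n0, le_max_right _ _, hn0⟩⟩
    refine Set.mem_iUnion.2 ⟨k, ?_⟩
    refine Set.mem_iUnion.2 ⟨Finset.mem_range.2 (by omega), ⟨hk, ?_⟩⟩
    have htr' : traceProc W A ω 1 = z := htr
    rw [traceProc_eq, hk, ENat.toNat_coe] at htr'
    exact htr'
  · intro h
    obtain ⟨j, hFj⟩ := Set.mem_iUnion.1 h
    obtain ⟨hone, k0, _, hk0⟩ := hFj
    simp only [Set.mem_iUnion] at hone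
    obtain ⟨k, _, hmT, hωk⟩ := hone
    constructor
    · show traceProc W A ω 1 = z
      have hmT' : mT W A ω 1 = (k : ℕ∞) := hmT
      rw [traceProc_eq, hmT', ENat.toNat_coe]
      exact hωk
    · exact ⟨k0, hk0⟩

lemma measurableSet_traceF1 (W A : Finset V) (z : V) :
    MeasurableSet ({ω : ℕ → V | traceProc W A ω 1 = z} ∩ hitS A) := by
  rw [traceF1_eq_iUnion]
  exact MeasurableSet.iUnion fun j => (det_traceF1seq W A z j).measurableSet

end Events
section Recur

open scoped Classical

variable {V : Type*} [DecidableEq V] [Fintype V] [MeasurableSpace V] [MeasurableSingletonClass V]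
variable {P : V → V → ℝ} {μ : V → Measure (ℕ → V)}
set_option linter.unusedSectionVars false

lemma measurable_shiftω (m : ℕ) : Measurable (shiftω (V := V) m) :=
  measurable_pi_lambda _ fun k => measurable_pi_apply (m + k)

lemma traceE_succ_decomp (W A : Finset V) (y : ℕ → V) (n : ℕ) :
    traceE W A y (n + 1) ∩ hitS A =
      ⋃ m : ℕ, (traceG W A y n m ∩
        shiftω m ⁻¹' ({ω : ℕ → V | traceProc W A ω 1 = y (n + 1)} ∩ hitS A)) := by
  ext ω
  constructor
  · rintro ⟨hE, hhit⟩
    have hent : entryTime A ω ≠ ⊤ := hitS_iff.1 hhit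
    obtain ⟨e, he⟩ := enat_exists_coe hent
    obtain ⟨m, hme, hm⟩ := enat_le_coe (show mT W A ω n ≤ (e : ℕ∞) from he ▸ mT_le_entry W A ω n)
    have hE0 : ω ∈ traceE W A y n := fun i hi => hE i (by omega)
    refine Set.mem_iUnion.2 ⟨m, ⟨hE0, hm⟩, ?_, ?_⟩
    · show traceProc W A (shiftω m ω) 1 = y (n + 1)
      have hsh := mT_shift hm
      have hne : mT W A (shiftω m ω) 1 ≠ ⊤ := by
        intro ht
        rw [ht] at hsh
        have hle : mT W A ω (n + 1) ≤ (e : ℕ∞) := he ▸ mT_le_entry W A ω (n + 1)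
        rw [hsh] at hle
        simp at hle
      obtain ⟨t, ht⟩ := enat_exists_coe hne
      rw [← traceProc_shift hm ht]
      exact hE (n + 1) le_rfl
    · show shiftω m ω ∈ hitS A
      rw [entryTime_eq_natInf] at he
      have heA : ω e ∈ A := (natInf_eq_coe_iff.1 he).1
      refine ⟨e - m, ?_⟩
      show ω (m + (e - m)) ∈ A
      rwa [show m + (e - m) = e by omega]
  · intro h
    obtain ⟨m, hG, hF⟩ := Set.mem_iUnion.1 h
    obtain ⟨hE0, hm⟩ := hG
    obtain ⟨htr1, hhit'⟩ := hF
    have hhit : ω ∈ hitS A := by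
      obtain ⟨k, hk⟩ := hhit'
      exact ⟨m + k, hk⟩
    refine ⟨?_, hhit⟩
    intro i hi
    rcases Nat.lt_or_ge i (n + 1) with h' | h'
    · exact hE0 i (by omega)
    · have hi' : i = n + 1 := by omega
      subst hi'
      have hent' : entryTime A (shiftω m ω) ≠ ⊤ := hitS_iff.1 hhit'
      have hne : mT W A (shiftω m ω) 1 ≠ ⊤ := by
        intro ht
        have hle := mT_le_entry W A (shiftω m ω) 1
        rw [ht] at hle
        exact hent' (top_le_iff.1 hle)
      obtain ⟨t, ht⟩ := enat_exists_coe hne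
      rw [traceProc_shift (hm : mT W A ω n = (m : ℕ∞)) ht]
      exact htr1

lemma traceG_pairwise_disjoint (W A : Finset V) (y : ℕ → V) (n : ℕ) :
    Pairwise (Function.onFun Disjoint (fun m => traceG W A y n m)) := by
  intro m m' hne
  rw [Function.onFun, Set.disjoint_left]
  rintro ω ⟨_, h1⟩ ⟨_, h2⟩
  have h1' : mT W A ω n = (m : ℕ∞) := h1
  have h2' : mT W A ω n = (m' : ℕ∞) := h2
  rw [h1'] at h2'
  exact hne (by exact_mod_cast h2')

lemma trace_recurrence
    (hP0 : ∀ a b : V, 0 ≤ P a b)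
    (hlaw : ∀ (a : V) (n : ℕ) (y : ℕ → V),
      μ a {ω | ∀ i ≤ n, ω i = y i} =
        ENNReal.ofReal ((if a = y 0 then (1 : ℝ) else 0) *
          ∏ i ∈ Finset.Icc 1 n, P (y (i - 1)) (y i)))
    (hprob : ∀ a : V, IsProbabilityMeasure (μ a))
    {A W : Finset V} {x : V} (hx : μ x (hitS A) = 1)
    (n : ℕ) (y : ℕ → V) (hyA : μ (y n) (hitS A) = 1) :
    μ x (traceE W A y (n + 1)) =
      μ x (traceE W A y n) * μ (y n) {ω : ℕ → V | traceProc W A ω 1 = y (n + 1)} := by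
  haveI := hprob x
  haveI := hprob (y n)
  have hFmeas := measurableSet_traceF1 W A (y (n + 1))
  have h1 : μ x (traceE W A y (n + 1)) = μ x (traceE W A y (n + 1) ∩ hitS A) :=
    (measure_inter_hitS hx _).symm
  rw [h1, traceE_succ_decomp]
  rw [measure_iUnion
    (fun m m' hne => Disjoint.mono Set.inter_subset_left Set.inter_subset_left
      (traceG_pairwise_disjoint W A y n hne))
    (fun m => ((det_traceG W A y n m).measurableSet).inter ((measurable_shiftω m) hFmeas))]
  have hterm : ∀ m : ℕ, μ x (traceG W A y n m ∩
      shiftω m ⁻¹' ({ω : ℕ → V | traceProc W A ω 1 = y (n + 1)} ∩ hitS A))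
      = μ x (traceG W A y n m) *
        μ (y n) ({ω : ℕ → V | traceProc W A ω 1 = y (n + 1)} ∩ hitS A) := fun m =>
    det_markov_lim hP0 hlaw x (y n) (det_traceG W A y n m) (fun ω hω => traceG_last hω)
      (traceF1seq_mono W A (y (n + 1))) (det_traceF1seq W A (y (n + 1)))
      (traceF1_eq_iUnion W A (y (n + 1)))
  simp only [hterm]
  rw [ENNReal.tsum_mul_right]
  have hsum : (∑' m : ℕ, μ x (traceG W A y n m)) = μ x (⋃ m, traceG W A y n m) :=
    (measure_iUnion (traceG_pairwise_disjoint W A y n)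
      (fun m => (det_traceG W A y n m).measurableSet)).symm
  rw [hsum]
  have hsub1 : traceE W A y n ∩ hitS A ⊆ ⋃ m, traceG W A y n m := by
    rintro ω ⟨hE, hhit⟩
    obtain ⟨e, he⟩ := enat_exists_coe (hitS_iff.1 hhit)
    obtain ⟨m, _, hm⟩ := enat_le_coe (show mT W A ω n ≤ (e : ℕ∞) from he ▸ mT_le_entry W A ω n)
    exact Set.mem_iUnion.2 ⟨m, hE, hm⟩
  have hsub2 : (⋃ m, traceG W A y n m) ⊆ traceE W A y n :=
    Set.iUnion_subset (fun m => Set.inter_subset_left)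
  have hEeq : μ x (⋃ m, traceG W A y n m) = μ x (traceE W A y n) := by
    apply le_antisymm (measure_mono hsub2)
    rw [← measure_inter_hitS hx (traceE W A y n)]
    exact measure_mono hsub1
  rw [hEeq, measure_inter_hitS hyA]

lemma trace_base
    (hlaw : ∀ (a : V) (n : ℕ) (y : ℕ → V),
      μ a {ω | ∀ i ≤ n, ω i = y i} =
        ENNReal.ofReal ((if a = y 0 then (1 : ℝ) else 0) *
          ∏ i ∈ Finset.Icc 1 n, P (y (i - 1)) (y i)))
    (W A : Finset V) (x : V) (y : ℕ → V) :
    μ x (traceE W A y 0) = ENNReal.ofReal (if x = y 0 then (1 : ℝ) else 0) := by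
  have hset : traceE W A y 0 = cylE y 0 := by
    ext ω
    constructor
    · intro h i hi
      have h0 := h 0 (le_refl 0)
      rw [traceProc_zero] at h0
      rw [Nat.le_zero.1 hi]
      exact h0
    · intro h i hi
      rw [Nat.le_zero.1 hi, traceProc_zero]
      exact h 0 le_rfl
  rw [hset, measure_cylE hlaw, wgt]
  norm_num

end Recur
section Part1

open scoped Classical ENNReal

variable {V : Type*} [DecidableEq V] [Fintype V] [MeasurableSpace V] [MeasurableSingletonClass V]
variable {P : V → V → ℝ} {μ : V → Measure (ℕ → V)}
set_option linter.unusedSectionVars false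

lemma trace_val_null
    (hP0 : ∀ a b : V, 0 ≤ P a b)
    (hlaw : ∀ (a : V) (n : ℕ) (y : ℕ → V),
      μ a {ω | ∀ i ≤ n, ω i = y i} =
        ENNReal.ofReal ((if a = y 0 then (1 : ℝ) else 0) *
          ∏ i ∈ Finset.Icc 1 n, P (y (i - 1)) (y i)))
    (hprob : ∀ a : V, IsProbabilityMeasure (μ a))
    {A W : Finset V} {x : V} (hx : μ x (hitS A) = 1)
    (n : ℕ) {z : V} (hz : μ z (hitS A) ≠ 1) :
    μ x ({ω : ℕ → V | traceProc W A ω n = z} ∩ hitS A) = 0 := by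
  haveI := hprob x
  set G : V → ℕ → Set (ℕ → V) :=
    fun v m => {ω | mT W A ω n = (m : ℕ∞)} ∩ {ω | ω m = v} with hG
  have hGdet : ∀ v m, Det m (G v m) := fun v m =>
    Det.inter (det_mT_eq le_rfl) (fun ω ω' hag h => by
      have h' : ω m = v := h
      show ω' m = v
      rw [← hag m le_rfl]; exact h')
  have hGlast : ∀ v m, ∀ ω ∈ G v m, ω m = v := fun v m ω h => h.2
  have hGdisj : ∀ v, Pairwise (Function.onFun Disjoint (G v)) := by
    intro v m m' hne
    rw [Function.onFun, Set.disjoint_left]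
    rintro ω ⟨h1, _⟩ ⟨h2, _⟩
    have h1' : mT W A ω n = (m : ℕ∞) := h1
    have h2' : mT W A ω n = (m' : ℕ∞) := h2
    rw [h1'] at h2'
    exact hne (by exact_mod_cast h2')
  have hdec : ∀ v : V, {ω : ℕ → V | traceProc W A ω n = v} ∩ hitS A
      = ⋃ m, (G v m ∩ shiftω m ⁻¹' hitS A) := by
    intro v
    ext ω
    constructor
    · rintro ⟨htr, hhit⟩
      obtain ⟨e, he⟩ := enat_exists_coe (hitS_iff.1 hhit)
      obtain ⟨m, hme, hm⟩ := enat_le_coe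
        (show mT W A ω n ≤ (e : ℕ∞) from he ▸ mT_le_entry W A ω n)
      have htr' : traceProc W A ω n = v := htr
      rw [traceProc_eq, hm, ENat.toNat_coe] at htr'
      refine Set.mem_iUnion.2 ⟨m, ⟨hm, htr'⟩, ?_⟩
      show shiftω m ω ∈ hitS A
      rw [entryTime_eq_natInf] at he
      have heA : ω e ∈ A := (natInf_eq_coe_iff.1 he).1
      exact ⟨e - m, show ω (m + (e - m)) ∈ A from by rwa [show m + (e - m) = e by omega]⟩
    · intro h
      obtain ⟨m, ⟨hm, hv⟩, hsh⟩ := Set.mem_iUnion.1 h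
      obtain ⟨k, hk⟩ := hsh
      refine ⟨?_, ⟨m + k, hk⟩⟩
      show traceProc W A ω n = v
      have hm' : mT W A ω n = (m : ℕ∞) := hm
      rw [traceProc_eq, hm', ENat.toNat_coe]
      exact hv
  have hμv : ∀ v : V, μ x ({ω : ℕ → V | traceProc W A ω n = v} ∩ hitS A)
      = μ x (⋃ m, G v m) * μ v (hitS A) := by
    intro v
    rw [hdec v, measure_iUnion
      (fun m m' hne => Disjoint.mono Set.inter_subset_left Set.inter_subset_left (hGdisj v hne))
      (fun m => ((hGdet v m).measurableSet).inter
        ((measurable_shiftω m) (measurableSet_hitS A)))]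
    have hterm : ∀ m, μ x (G v m ∩ shiftω m ⁻¹' hitS A) = μ x (G v m) * μ v (hitS A) := fun m =>
      det_markov_lim hP0 hlaw x v (hGdet v m) (hGlast v m) (hitSeq_mono A) (det_hitSeq A)
        (hitS_eq_iUnion A)
    simp only [hterm]
    rw [ENNReal.tsum_mul_right, measure_iUnion (hGdisj v) (fun m => (hGdet v m).measurableSet)]
  have hpart : hitS A = ⋃ v ∈ (Finset.univ : Finset V),
      ({ω : ℕ → V | traceProc W A ω n = v} ∩ hitS A) := by
    ext ω
    constructor
    · intro h
      exact Set.mem_iUnion.2 ⟨traceProc W A ω n, Set.mem_iUnion.2 ⟨Finset.mem_univ _, rfl, h⟩⟩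
    · intro h
      simp only [Set.mem_iUnion] at h
      obtain ⟨v, _, _, hh⟩ := h
      exact hh
  have hmeasv : ∀ v : V, MeasurableSet ({ω : ℕ → V | traceProc W A ω n = v} ∩ hitS A) := by
    intro v
    rw [hdec v]
    exact MeasurableSet.iUnion fun m => ((hGdet v m).measurableSet).inter
      ((measurable_shiftω m) (measurableSet_hitS A))
  have hdisjv : Set.PairwiseDisjoint (↑(Finset.univ : Finset V))
      (fun v => {ω : ℕ → V | traceProc W A ω n = v} ∩ hitS A) := by
    intro v _ v' _ hne
    rw [Function.onFun, Set.disjoint_left]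
    rintro ω ⟨h1, _⟩ ⟨h2, _⟩
    have h1' : traceProc W A ω n = v := h1
    have h2' : traceProc W A ω n = v' := h2
    exact hne (by rw [← h1', h2'])
  have hsum1 : ∑ v : V, μ x ({ω : ℕ → V | traceProc W A ω n = v} ∩ hitS A) = 1 := by
    rw [← measure_biUnion_finset hdisjv (fun v _ => hmeasv v), ← hpart, hx]
  set p : V → ℝ≥0∞ := fun v => μ x (⋃ m, G v m) with hp
  set q : V → ℝ≥0∞ := fun v => μ v (hitS A) with hq
  have hple : ∑ v : V, p v ≤ 1 := by
    have hdisjU : Set.PairwiseDisjoint (↑(Finset.univ : Finset V)) (fun v => ⋃ m, G v m) := by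
      intro v _ v' _ hne
      rw [Function.onFun, Set.disjoint_left]
      intro ω h1 h2
      obtain ⟨m, hm1⟩ := Set.mem_iUnion.1 h1
      obtain ⟨m', hm2⟩ := Set.mem_iUnion.1 h2
      have e1 : mT W A ω n = (m : ℕ∞) := hm1.1
      have e2 : mT W A ω n = (m' : ℕ∞) := hm2.1
      have hmm : m = m' := by rw [e1] at e2; exact_mod_cast e2
      subst hmm
      have f1 : ω m = v := hm1.2
      have f2 : ω m = v' := hm2.2
      exact hne (by rw [← f1, f2])
    rw [hp, ← measure_biUnion_finset hdisjU
      (fun v _ => MeasurableSet.iUnion (fun m => (hGdet v m).measurableSet))]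
    exact prob_le_one
  have hqle : ∀ v, q v ≤ 1 := fun v => by
    haveI := hprob v
    exact prob_le_one
  have hsum2 : ∑ v : V, p v * q v = 1 := by
    rw [← hsum1]
    exact Finset.sum_congr rfl fun v _ => (hμv v).symm
  -- now isolate z
  have hS_ne_top : (∑ v ∈ Finset.univ.erase z, p v) ≠ ⊤ := by
    intro htop
    have : (⊤ : ℝ≥0∞) ≤ ∑ v : V, p v := by
      rw [← htop]
      exact Finset.sum_le_sum_of_subset (Finset.erase_subset _ _)
    exact absurd (le_trans this hple) (by simp)
  have hkey : p z + ∑ v ∈ Finset.univ.erase z, p v ≤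
      p z * q z + ∑ v ∈ Finset.univ.erase z, p v := by
    rw [Finset.add_sum_erase _ p (Finset.mem_univ z)]
    calc ∑ v : V, p v ≤ 1 := hple
    _ = ∑ v : V, p v * q v := hsum2.symm
    _ = p z * q z + ∑ v ∈ Finset.univ.erase z, p v * q v :=
        (Finset.add_sum_erase _ (fun v => p v * q v) (Finset.mem_univ z)).symm
    _ ≤ p z * q z + ∑ v ∈ Finset.univ.erase z, p v := by
        apply add_le_add_right
        apply Finset.sum_le_sum
        intro v _
        calc p v * q v ≤ p v * 1 := mul_le_mul_right (hqle v) _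
        _ = p v := mul_one _
  have hple2 : p z ≤ p z * q z := (ENNReal.add_le_add_iff_right hS_ne_top).1 hkey
  have hpq : p z = p z * q z := le_antisymm hple2
    (by calc p z * q z ≤ p z * 1 := mul_le_mul_right (hqle z) _
        _ = p z := mul_one _)
  have hpz : p z = 0 := by
    by_contra hp0
    have hptop : p z ≠ ⊤ := measure_ne_top _ _
    have hqlt : q z < 1 := lt_of_le_of_ne (hqle z) hz
    have : p z * q z < p z * 1 := (ENNReal.mul_lt_mul_iff_right hp0 hptop).2 hqlt
    rw [mul_one, ← hpq] at this
    exact absurd this (lt_irrefl _)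
  rw [hμv z]
  have e1 : (μ x) (⋃ m, G z m) = p z := rfl
  have e2 : (μ z) (hitS A) = q z := rfl
  rw [e1, e2, hpz, zero_mul]

end Part1

section Final

open scoped Classical ENNReal

variable {V : Type*} [DecidableEq V] [Fintype V] [MeasurableSpace V] [MeasurableSingletonClass V]
variable {P : V → V → ℝ} {μ : V → Measure (ℕ → V)}
set_option linter.unusedSectionVars false

lemma trace_in_VA
    (hP0 : ∀ a b : V, 0 ≤ P a b)
    (hlaw : ∀ (a : V) (n : ℕ) (y : ℕ → V),
      μ a {ω | ∀ i ≤ n, ω i = y i} =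
        ENNReal.ofReal ((if a = y 0 then (1 : ℝ) else 0) *
          ∏ i ∈ Finset.Icc 1 n, P (y (i - 1)) (y i)))
    (hprob : ∀ a : V, IsProbabilityMeasure (μ a))
    {A W : Finset V} {x : V} (hx : μ x (hitS A) = 1) :
    μ x {ω : ℕ → V | ∀ n : ℕ, μ (traceProc W A ω n) (hitS A) = 1} = 1 := by
  haveI := hprob x
  set Bad := ⋃ (n : ℕ), ⋃ (z : {z : V // μ z (hitS A) ≠ 1}),
    ({ω : ℕ → V | traceProc W A ω n = (z : V)} ∩ hitS A) with hBad
  have hBadnull : μ x Bad = 0 := by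
    rw [hBad]
    refine measure_iUnion_null fun n => measure_iUnion_null fun z => ?_
    exact trace_val_null hP0 hlaw hprob hx n z.2
  have hsub : hitS A ⊆ {ω : ℕ → V | ∀ n : ℕ, μ (traceProc W A ω n) (hitS A) = 1} ∪ Bad := by
    intro ω hω
    by_cases h : ∀ n : ℕ, μ (traceProc W A ω n) (hitS A) = 1
    · exact Or.inl h
    · push_neg at h
      obtain ⟨n, hn⟩ := h
      exact Or.inr (Set.mem_iUnion.2 ⟨n, Set.mem_iUnion.2 ⟨⟨_, hn⟩, rfl, hω⟩⟩)
  have h1 : (1 : ℝ≥0∞) ≤ μ x {ω : ℕ → V | ∀ n : ℕ, μ (traceProc W A ω n) (hitS A) = 1} := by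
    calc (1 : ℝ≥0∞) = μ x (hitS A) := hx.symm
    _ ≤ μ x ({ω : ℕ → V | ∀ n : ℕ, μ (traceProc W A ω n) (hitS A) = 1} ∪ Bad) :=
        measure_mono hsub
    _ ≤ μ x {ω : ℕ → V | ∀ n : ℕ, μ (traceProc W A ω n) (hitS A) = 1} + μ x Bad :=
        measure_union_le _ _
    _ = μ x {ω : ℕ → V | ∀ n : ℕ, μ (traceProc W A ω n) (hitS A) = 1} := by
        rw [hBadnull, add_zero]
  exact le_antisymm prob_le_one h1

end Final


theorem trace_process_is_markov_chain
    {V : Type*} [Fintype V] [DecidableEq V] [Nonempty V]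
    [MeasurableSpace V] [MeasurableSingletonClass V]
    (P : V → V → ℝ) (μ : V → Measure (ℕ → V))
    (hP0 : ∀ a b : V, 0 ≤ P a b) (hP1 : ∀ a : V, ∑ b : V, P a b = 1)
    (hprob : ∀ a : V, IsProbabilityMeasure (μ a))
    (hlaw : ∀ (a : V) (n : ℕ) (y : ℕ → V),
      μ a {ω | ∀ i ≤ n, ω i = y i} =
        ENNReal.ofReal ((if a = y 0 then (1 : ℝ) else 0) *
          ∏ i ∈ Finset.Icc 1 n, P (y (i - 1)) (y i)))
    (A : Finset V) (W : Finset V) (x : V)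
    (hx : μ x {ω | ∃ n : ℕ, ω n ∈ A} = 1) :
    μ x {ω | ∀ n : ℕ, μ (traceProc W A ω n) {ω' | ∃ k : ℕ, ω' k ∈ A} = 1} = 1 ∧
      ∀ (n : ℕ) (y : ℕ → V), (∀ i ≤ n, μ (y i) {ω | ∃ k : ℕ, ω k ∈ A} = 1) →
        (μ x {ω | ∀ i ≤ n, traceProc W A ω i = y i}).toReal =
          (if x = y 0 then (1 : ℝ) else 0) *
            ∏ i ∈ Finset.Icc 1 n,
              (μ (y (i - 1)) {ω | traceProc W A ω 1 = y i}).toReal := by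
  have hx' : μ x (hitS A) = 1 := hx
  constructor
  · exact trace_in_VA hP0 hlaw hprob hx'
  · intro n y
    induction n with
    | zero =>
      intro _
      have hbase := trace_base (μ := μ) hlaw W A x y
      rw [show {ω : ℕ → V | ∀ i ≤ 0, traceProc W A ω i = y i} = traceE W A y 0 from rfl,
        hbase, ENNReal.toReal_ofReal (by split <;> norm_num)]
      simp
    | succ n ih =>
      intro hy
      have hyA : μ (y n) (hitS A) = 1 := hy n (by omega)
      have hrec := trace_recurrence (W := W) hP0 hlaw hprob hx' n y hyA
      rw [show {ω : ℕ → V | ∀ i ≤ n + 1, traceProc W A ω i = y i} = traceE W A y (n + 1) from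
        rfl, hrec, ENNReal.toReal_mul]
      rw [show (μ x (traceE W A y n)).toReal
          = (μ x {ω : ℕ → V | ∀ i ≤ n, traceProc W A ω i = y i}).toReal from rfl]
      rw [ih (fun i hi => hy i (by omega))]
      rw [Finset.prod_Icc_succ_top (by omega : 1 ≤ n + 1),
        show n + 1 - 1 = n from by omega]
      ring

end LERW
end
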